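/- arXiv:math-ph/0001033 — 7 statements merged into one kernel-verified Lean document; each statement's English description precedes it below -/
import Mathlib

section
/- For all ε ∈ (0,1/2), β ∈ (0,∞) and λ ∈ ℂ, with μ = √(ε²+|λ|²), the one-site BCS Gibbs density matrix satisfies Tr(ρ_λ · σ^-) = λ · tanh(βμ)/(2μ). Consequently, λ satisfies the self-consistency (gap) equation Tr(ρ_λ · σ^-) = λ if and only if λ·(1 − tanh(βμ)/(2μ)) = 0. -/
open Matrix

/-- Matrix exponential on 2×2 complex matrices. -/
noncomputable def mexp (A : Matrix (Fin 2) (Fin 2) ℂ) : Matrix (Fin 2) (Fin 2) ℂ :=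
  NormedSpace.exp A

/-- Pauli matrix σ^z. -/
def σz : Matrix (Fin 2) (Fin 2) ℂ := !![1, 0; 0, -1]
/-- Pauli matrix σ^+. -/
def σp : Matrix (Fin 2) (Fin 2) ℂ := !![0, 1; 0, 0]
/-- Pauli matrix σ^-. -/
def σm : Matrix (Fin 2) (Fin 2) ℂ := !![0, 0; 1, 0]

/-- μ = √(ε² + |λ|²). -/
noncomputable def μBCS (ε : ℝ) (l : ℂ) : ℝ := Real.sqrt (ε ^ 2 + ‖l‖ ^ 2)

/-- One-site effective Hamiltonian h_λ = ε·σ^z − λ·σ^+ − (conj λ)·σ^-. -/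
noncomputable def hBCS (ε : ℝ) (l : ℂ) : Matrix (Fin 2) (Fin 2) ℂ :=
  (ε : ℂ) • σz - l • σp - (starRingEnd ℂ l) • σm

/-- One-site Gibbs density matrix ρ_λ = exp(−β h_λ)/Tr exp(−β h_λ). -/
noncomputable def ρBCS (ε β : ℝ) (l : ℂ) : Matrix (Fin 2) (Fin 2) ℂ :=
  (Matrix.trace (mexp (-(β : ℂ) • hBCS ε l)))⁻¹ • mexp (-(β : ℂ) • hBCS ε l)

/-- Spectral projection P₊ = (1/2)(1 + h_λ/μ). -/
noncomputable def Pplus (ε : ℝ) (l : ℂ) : Matrix (Fin 2) (Fin 2) ℂ :=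
  (1 / 2 : ℂ) • (1 + (μBCS ε l : ℂ)⁻¹ • hBCS ε l)

/-- Spectral projection P₋ = (1/2)(1 − h_λ/μ). -/
noncomputable def Pminus (ε : ℝ) (l : ℂ) : Matrix (Fin 2) (Fin 2) ℂ :=
  (1 / 2 : ℂ) • (1 - (μBCS ε l : ℂ)⁻¹ • hBCS ε l)

/-- E₋(A) = P₋·A·P₊. -/
noncomputable def Eminus (ε : ℝ) (l : ℂ) (A : Matrix (Fin 2) (Fin 2) ℂ) :
    Matrix (Fin 2) (Fin 2) ℂ := Pminus ε l * A * Pplus ε l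

/-- E₀(A) = P₋·A·P₋ + P₊·A·P₊. -/
noncomputable def Ezero (ε : ℝ) (l : ℂ) (A : Matrix (Fin 2) (Fin 2) ℂ) :
    Matrix (Fin 2) (Fin 2) ℂ := Pminus ε l * A * Pminus ε l + Pplus ε l * A * Pplus ε l

/-- E₊(A) = P₊·A·P₋. -/
noncomputable def Eplus (ε : ℝ) (l : ℂ) (A : Matrix (Fin 2) (Fin 2) ℂ) :
    Matrix (Fin 2) (Fin 2) ℂ := Pplus ε l * A * Pminus ε l

/-- The complex structure map J(A) = i·(E₊(A) − E₋(A)). -/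
noncomputable def Jmap (ε : ℝ) (l : ℂ) (A : Matrix (Fin 2) (Fin 2) ℂ) :
    Matrix (Fin 2) (Fin 2) ℂ := Complex.I • (Eplus ε l A - Eminus ε l A)

/-- Reduced symmetry generator σ̂^z = (E₊ + E₋)(σ^z). -/
noncomputable def σhat (ε : ℝ) (l : ℂ) : Matrix (Fin 2) (Fin 2) ℂ :=
  Eplus ε l σz + Eminus ε l σz

/-- Canonical order parameter Jσ̂^z = i·(E₊ − E₋)(σ^z). -/
noncomputable def Jσhat (ε : ℝ) (l : ℂ) : Matrix (Fin 2) (Fin 2) ℂ :=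
  Jmap ε l σz


theorem bcs_aux (ε β : ℝ) (hε0 : 0 < ε) (hβ : 0 < β) (l : ℂ) :
    Matrix.trace (ρBCS ε β l * σm) =
      l * (Real.tanh (β * μBCS ε l) : ℂ) / (2 * (μBCS ε l : ℂ)) := by
  have hm2R : (μBCS ε l) ^ 2 = ε ^ 2 + ‖l‖ ^ 2 :=
    Real.sq_sqrt (by positivity)
  have hm0 : 0 < μBCS ε l := Real.sqrt_pos.mpr (by positivity)
  set m : ℝ := μBCS ε l with hmdef
  clear_value m
  have hmc0 : ((m : ℂ)) ≠ 0 := by exact_mod_cast hm0.ne'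
  have hm2 : (m : ℂ) ^ 2 = (ε : ℂ) ^ 2 + l * (starRingEnd ℂ l) := by
    have h2 : l * (starRingEnd ℂ l) = ((‖l‖ ^ 2 : ℝ) : ℂ) := by
      rw [Complex.mul_conj, Complex.sq_norm]
    rw [h2, ← Complex.ofReal_pow, hm2R]; push_cast; ring
  set c : ℂ := (m : ℂ) + (ε : ℂ) with hcdef
  have hc0 : c ≠ 0 := by
    have h : ((m + ε : ℝ) : ℂ) ≠ 0 := by exact_mod_cast (by positivity : (0:ℝ) < m + ε).ne'
    rw [hcdef]; exact_mod_cast h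
  set d : ℂ := 2 * (m : ℂ) * c with hddef
  have hd0 : d ≠ 0 := by
    rw [hddef]; exact mul_ne_zero (mul_ne_zero two_ne_zero hmc0) hc0
  have hdval : c ^ 2 + l * (starRingEnd ℂ l) = d := by
    rw [hddef, hcdef]; linear_combination -hm2
  set P : Matrix (Fin 2) (Fin 2) ℂ := !![c, l; -(starRingEnd ℂ l), c] with hPdef
  set Qm : Matrix (Fin 2) (Fin 2) ℂ := !![c, -l; starRingEnd ℂ l, c] with hQmdef
  set Q : Matrix (Fin 2) (Fin 2) ℂ := d⁻¹ • Qm with hQdef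
  have hPQm : P * Qm = d • 1 := by
    ext i j
    fin_cases i <;> fin_cases j <;>
      simp [hPdef, hQmdef, Matrix.mul_apply, Fin.sum_univ_two, Matrix.one_apply] <;>
      first | ring1 | linear_combination hdval
  have hPQ : P * Q = 1 := by
    rw [hQdef, Matrix.mul_smul, hPQm, smul_smul, inv_mul_cancel₀ hd0, one_smul]
  have hPinv : P⁻¹ = Q := Matrix.inv_eq_right_inv hPQ
  have hdet : IsUnit P.det := Matrix.isUnit_det_of_right_inverse hPQ
  have hPunit : IsUnit P := (Matrix.isUnit_iff_isUnit_det P).mpr hdet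
  set xc : ℂ := ((β * m : ℝ) : ℂ) with hxdef
  have hcomm : (-(β : ℂ) • hBCS ε l) * P = P * Matrix.diagonal ![-xc, xc] := by
    ext i j
    fin_cases i <;> fin_cases j <;>
      simp [hPdef, hBCS, σz, σp, σm, Matrix.mul_apply, Fin.sum_univ_two,
        Matrix.diagonal, hxdef, hcdef] <;>
      push_cast <;>
      first
        | ring1
        | linear_combination (β : ℂ) * hm2
        | linear_combination -(β : ℂ) * hm2
  have hhD : -(β : ℂ) • hBCS ε l = P * Matrix.diagonal ![-xc, xc] * P⁻¹ := by
    rw [← hcomm, Matrix.mul_nonsing_inv_cancel_right _ _ hdet]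
  have hexpdiag : NormedSpace.exp (Matrix.diagonal ![-xc, xc]) =
      Matrix.diagonal ![Complex.exp (-xc), Complex.exp xc] := by
    have hv : NormedSpace.exp (![-xc, xc] : Fin 2 → ℂ) =
        ![Complex.exp (-xc), Complex.exp xc] := by
      rw [Pi.exp_def]
      funext i
      fin_cases i <;> simp [← Complex.exp_eq_exp_ℂ]
    rw [Matrix.exp_diagonal, hv]
  have hexp : mexp (-(β : ℂ) • hBCS ε l) =
      P * Matrix.diagonal ![Complex.exp (-xc), Complex.exp xc] * P⁻¹ := by
    rw [mexp, hhD, Matrix.exp_conj P _ hPunit, hexpdiag]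
  set ep : ℂ := Complex.exp xc with hepdef
  set em : ℂ := Complex.exp (-xc) with hemdef
  have hdiagmat : (Matrix.diagonal ![em, ep]) = !![em, 0; 0, ep] := by
    ext i j
    fin_cases i <;> fin_cases j <;> simp [Matrix.diagonal]
  have hR : P * Matrix.diagonal ![em, ep] * Qm =
      !![c ^ 2 * em + l * (starRingEnd ℂ l) * ep, c * l * (ep - em);
         c * (starRingEnd ℂ l) * (ep - em), l * (starRingEnd ℂ l) * em + c ^ 2 * ep] := by
    rw [hdiagmat]
    ext i j
    fin_cases i <;> fin_cases j <;>
      simp [hPdef, hQmdef, Matrix.mul_apply, Fin.sum_univ_two] <;>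
      ring1
  have hRs : P * Matrix.diagonal ![em, ep] * P⁻¹ =
      d⁻¹ • !![c ^ 2 * em + l * (starRingEnd ℂ l) * ep, c * l * (ep - em);
         c * (starRingEnd ℂ l) * (ep - em), l * (starRingEnd ℂ l) * em + c ^ 2 * ep] := by
    rw [hPinv, hQdef, Matrix.mul_smul, hR]
  have htrE : Matrix.trace (mexp (-(β : ℂ) • hBCS ε l)) = em + ep := by
    rw [hexp, hRs, Matrix.trace_smul]
    simp only [Matrix.trace_fin_two_of, smul_eq_mul]
    field_simp
    linear_combination (em + ep) * hdval
  have htrEsm : Matrix.trace (mexp (-(β : ℂ) • hBCS ε l) * σm) =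
      l * (ep - em) / (2 * (m : ℂ)) := by
    rw [hexp, hRs, Matrix.smul_mul, Matrix.trace_smul]
    simp only [σm, Matrix.trace_fin_two, Matrix.mul_apply, Fin.sum_univ_two, smul_eq_mul]
    simp
    field_simp
    first
      | linear_combination l * (ep - em) * hddef
      | linear_combination -l * (ep - em) * hddef
      | linear_combination l * ep * hddef - l * em * hddef
      | linear_combination -(l * ep * hddef - l * em * hddef)
  have h1 : ep = ((Real.exp (β * m) : ℝ) : ℂ) := by
    rw [hepdef, hxdef, Complex.ofReal_exp]
  have h2 : em = ((Real.exp (-(β * m)) : ℝ) : ℂ) := by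
    rw [hemdef, hxdef, ← Complex.ofReal_neg, Complex.ofReal_exp]
  have hne : em + ep ≠ 0 := by
    rw [h1, h2, ← Complex.ofReal_add]
    exact_mod_cast (by positivity : (0:ℝ) < Real.exp (-(β * m)) + Real.exp (β * m)).ne'
  have hRtanh : Real.tanh (β * m) =
      (Real.exp (β * m) - Real.exp (-(β * m))) / (Real.exp (β * m) + Real.exp (-(β * m))) := by
    have hb : Real.exp (β * m) + Real.exp (-(β * m)) ≠ 0 := by positivity
    rw [Real.tanh_eq_sinh_div_cosh, Real.sinh_eq, Real.cosh_eq]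
    field_simp
  have htanh : ((Real.tanh (β * m) : ℝ) : ℂ) = (ep - em) / (ep + em) := by
    rw [hRtanh, h1, h2]
    push_cast
    ring
  have hρ : ρBCS ε β l * σm =
      (Matrix.trace (mexp (-(β : ℂ) • hBCS ε l)))⁻¹ •
        (mexp (-(β : ℂ) • hBCS ε l) * σm) := by
    rw [ρBCS, Matrix.smul_mul]
  rw [hρ, Matrix.trace_smul, htrE, htrEsm, htanh, smul_eq_mul]
  rw [add_comm em ep]
  ring

/-- Tr(ρ_λ·σ^-) = λ·tanh(βμ)/(2μ), and the self-consistency (gap) equation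
Tr(ρ_λ·σ^-) = λ holds iff λ·(1 − tanh(βμ)/(2μ)) = 0. -/
theorem bcs_order_parameter_and_gap_equation
    (ε β : ℝ) (hε : ε ∈ Set.Ioo (0 : ℝ) (1 / 2)) (hβ : 0 < β) (l : ℂ) :
    Matrix.trace (ρBCS ε β l * σm) =
      l * (Real.tanh (β * μBCS ε l) : ℂ) / (2 * (μBCS ε l : ℂ)) ∧
    (Matrix.trace (ρBCS ε β l * σm) = l ↔
      l * (1 - (Real.tanh (β * μBCS ε l) : ℂ) / (2 * (μBCS ε l : ℂ))) = 0) := by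
  have h1 := bcs_aux ε β hε.1 hβ l
  refine ⟨h1, ?_⟩
  rw [h1, mul_sub, mul_one, sub_eq_zero, mul_div_assoc]
  exact eq_comm
end

section
/- For every ε ∈ (0,1/2) there is a unique β_c > 0 such that tanh(β_c·ε) = 2ε, and for every β > β_c there exists r > 0 such that tanh(β·√(ε²+r²)) = 2·√(ε²+r²); that is, for β > β_c the BCS gap equation λ·(1 − tanh(βμ)/(2μ)) = 0 with μ = √(ε²+|λ|²) has nonzero solutions λ (namely all λ with |λ| = r), describing the superconducting phase. -/
lemma tanh_formula (x : ℝ) : Real.tanh x = 1 - 2 / (Real.exp (2*x) + 1) := by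
  rw [Real.tanh_eq_sinh_div_cosh, Real.sinh_eq, Real.cosh_eq]
  have h1 : (0:ℝ) < Real.exp x := Real.exp_pos x
  have hexp : Real.exp (2*x) = Real.exp x * Real.exp x := by rw [← Real.exp_add]; ring_nf
  have h4 : Real.exp (-x) = (Real.exp x)⁻¹ := Real.exp_neg x
  rw [hexp, h4]
  have h2 : Real.exp x + (Real.exp x)⁻¹ > 0 := by positivity
  field_simp
  ring

lemma tanh_lt_one' (x : ℝ) : Real.tanh x < 1 := by
  rw [tanh_formula]
  have : (0:ℝ) < 2 / (Real.exp (2*x) + 1) := by positivity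
  linarith

lemma tanh_strictMono : StrictMono Real.tanh := by
  intro x y hxy
  rw [tanh_formula, tanh_formula]
  have h1 : (0:ℝ) < Real.exp (2*x) + 1 := by positivity
  have h2 : Real.exp (2*x) + 1 < Real.exp (2*y) + 1 := by
    have := Real.exp_lt_exp.2 (by linarith : 2*x < 2*y); linarith
  have := div_lt_div_of_pos_left (by norm_num : (0:ℝ) < 2) h1 h2
  linarith

lemma tanh_continuous : Continuous Real.tanh := by
  have : Real.tanh = fun x => 1 - 2 / (Real.exp (2*x) + 1) := funext tanh_formula
  rw [this]
  refine Continuous.sub continuous_const (Continuous.div continuous_const (by continuity) ?_)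
  intro x; positivity



/-- for every ε ∈ (0,1/2) there is a unique β_c > 0 with tanh(β_c·ε) = 2ε, and
for every β > β_c there is r > 0 with tanh(β·√(ε²+r²)) = 2·√(ε²+r²); hence for β > β_c
the BCS gap equation λ·(1 − tanh(β√(ε²+|λ|²))/(2√(ε²+|λ|²))) = 0 has nonzero solutions,
namely all λ with |λ| = r. -/
theorem bcs_critical_temperature_and_superconducting_phase
    (ε : ℝ) (hε : ε ∈ Set.Ioo (0 : ℝ) (1 / 2)) :
    ∃ βc : ℝ, 0 < βc ∧ Real.tanh (βc * ε) = 2 * ε ∧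
      (∀ β' : ℝ, 0 < β' → Real.tanh (β' * ε) = 2 * ε → β' = βc) ∧
      ∀ β : ℝ, βc < β → ∃ r : ℝ, 0 < r ∧
        Real.tanh (β * Real.sqrt (ε ^ 2 + r ^ 2)) = 2 * Real.sqrt (ε ^ 2 + r ^ 2) ∧
        ∀ l : ℂ, ‖l‖ = r → l ≠ 0 ∧
          l * (1 - (Real.tanh (β * Real.sqrt (ε ^ 2 + ‖l‖ ^ 2)) : ℂ) /
            (2 * (Real.sqrt (ε ^ 2 + ‖l‖ ^ 2) : ℂ))) = 0 := by
  obtain ⟨hε0, hε2⟩ := hε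
  -- find x0 with tanh x0 > 2ε
  set x0 : ℝ := 1 / (1 - 2*ε) with hx0def
  have h12 : (0:ℝ) < 1 - 2*ε := by linarith
  have hx0pos : 0 < x0 := by positivity
  have hx0 : 2 * ε < Real.tanh x0 := by
    rw [tanh_formula]
    have hE : 2 * x0 + 1 ≤ Real.exp (2 * x0) := Real.add_one_le_exp _
    have hE2 : 2 / (1 - 2*ε) + 1 ≤ Real.exp (2 * x0) := by
      rw [hx0def] at hE ⊢
      have : 2 / (1 - 2*ε) = 2 * (1/(1-2*ε)) := by ring
      rw [this]; exact hE
    have hpos : (0:ℝ) < Real.exp (2*x0) + 1 := by positivity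
    have : 2 / (Real.exp (2*x0) + 1) < 1 - 2*ε := by
      rw [div_lt_iff₀ hpos]
      have : 2 / (1 - 2*ε) < Real.exp (2*x0) + 1 := by linarith
      calc (2:ℝ) = (2 / (1-2*ε)) * (1-2*ε) := by field_simp
        _ < (Real.exp (2*x0) + 1) * (1-2*ε) := by
            exact mul_lt_mul_of_pos_right this h12
        _ = (1-2*ε) * (Real.exp (2*x0) + 1) := by ring
    linarith
  -- IVT for c with tanh c = 2ε
  have hcont : ContinuousOn Real.tanh (Set.Icc 0 x0) := tanh_continuous.continuousOn
  have hmem : (2*ε) ∈ Set.Icc (Real.tanh 0) (Real.tanh x0) := by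
    constructor
    · rw [Real.tanh_zero]; linarith
    · linarith
  obtain ⟨c, hcmem, hc⟩ := intermediate_value_Icc (le_of_lt hx0pos) hcont hmem
  have hcpos : 0 < c := by
    rcases lt_or_eq_of_le hcmem.1 with h | h
    · exact h
    · exfalso; rw [← h, Real.tanh_zero] at hc; linarith
  refine ⟨c / ε, div_pos hcpos hε0, ?_, ?_, ?_⟩
  · rw [div_mul_cancel₀ _ (ne_of_gt hε0)]; exact hc
  · intro β' hβ' hβ'eq
    have : Real.tanh (β' * ε) = Real.tanh c := by
      rw [hβ'eq, hc]
    have hβε : β' * ε = c := tanh_strictMono.injective this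
    field_simp [← hβε]; exact hβε
  · intro β hβ
    have hβc : c < β * ε := by
      have := (div_lt_iff₀ hε0).1 hβ; linarith
    -- g r = tanh(β√(ε²+r²)) − 2√(ε²+r²)
    set g : ℝ → ℝ := fun r => Real.tanh (β * Real.sqrt (ε^2 + r^2)) - 2 * Real.sqrt (ε^2 + r^2) with hg
    have hβpos : 0 < β := lt_trans (div_pos hcpos hε0) hβ
    have hg0 : 0 < g 0 := by
      simp only [hg]
      have hs0 : Real.sqrt (ε^2 + 0^2) = ε := by
        norm_num; exact Real.sqrt_sq (le_of_lt hε0)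
      rw [hs0]
      have : Real.tanh c < Real.tanh (β * ε) := tanh_strictMono hβc
      rw [hc] at this; linarith
    have hg1 : g 1 < 0 := by
      simp only [hg]
      have h1 : (1:ℝ) ≤ Real.sqrt (ε^2 + 1^2) := by
        nlinarith [Real.sq_sqrt (show (0:ℝ) ≤ ε^2+1^2 by positivity),
          Real.sqrt_nonneg (ε^2+1^2), sq_nonneg ε]
      have := tanh_lt_one' (β * Real.sqrt (ε^2 + 1^2))
      linarith
    have hgcont : ContinuousOn g (Set.Icc 0 1) := by
      apply Continuous.continuousOn
      apply Continuous.sub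
      · exact tanh_continuous.comp (continuous_const.mul ((continuous_const.add (continuous_pow 2)).sqrt))
      · exact continuous_const.mul ((continuous_const.add (continuous_pow 2)).sqrt)
    have hmem2 : (0:ℝ) ∈ Set.Icc (g 1) (g 0) := ⟨le_of_lt hg1, le_of_lt hg0⟩
    obtain ⟨r, hrmem, hr⟩ := intermediate_value_Icc' (by norm_num : (0:ℝ) ≤ 1) hgcont hmem2
    have hrpos : 0 < r := by
      rcases lt_or_eq_of_le hrmem.1 with h | h
      · exact h
      · exfalso; rw [← h] at hr; linarith
    have heq : Real.tanh (β * Real.sqrt (ε^2 + r^2)) = 2 * Real.sqrt (ε^2 + r^2) := by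
      simp only [hg] at hr; linarith
    refine ⟨r, hrpos, heq, ?_⟩
    intro l hl
    have hlne : l ≠ 0 := by
      intro h; rw [h] at hl; simp at hl; exact absurd hl.symm (ne_of_gt hrpos)
    refine ⟨hlne, ?_⟩
    rw [hl]
    have hs : (0:ℝ) < Real.sqrt (ε^2 + r^2) := Real.sqrt_pos.2 (by positivity)
    have hne : (2 * (Real.sqrt (ε^2 + r^2) : ℂ)) ≠ 0 := by
      simp only [ne_eq, mul_eq_zero]
      push_neg
      exact ⟨by norm_num, by exact_mod_cast ne_of_gt hs⟩
    have : (Real.tanh (β * Real.sqrt (ε^2 + r^2)) : ℂ) = 2 * (Real.sqrt (ε^2 + r^2) : ℂ) := by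
      rw [heq]; push_cast; ring
    rw [this, div_self hne, sub_self, mul_zero]
end

section
/- Tr(ρ_λ · σ^z) = −(ε/μ)·tanh(βμ). In particular, if λ ≠ 0 satisfies the gap equation tanh(βμ) = 2μ, then Tr(ρ_λ · σ^z) = −2ε. -/
open Matrix

section Aux

variable (ε β : ℝ) (l : ℂ)

noncomputable def dBCS : ℝ := (ε + μBCS ε l) ^ 2 + ‖l‖ ^ 2

noncomputable def Bmat : Matrix (Fin 2) (Fin 2) ℂ :=
  !![((ε : ℂ) + μBCS ε l), l; -(starRingEnd ℂ l), ((ε : ℂ) + μBCS ε l)]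

noncomputable def Cmat : Matrix (Fin 2) (Fin 2) ℂ :=
  !![((ε : ℂ) + μBCS ε l) / dBCS ε l, -l / dBCS ε l;
     (starRingEnd ℂ l) / dBCS ε l, ((ε : ℂ) + μBCS ε l) / dBCS ε l]

end Aux

lemma diag_fin_two (x y : ℂ) : Matrix.diagonal ![x, y] = !![x, 0; 0, y] := by
  ext i j
  fin_cases i <;> fin_cases j <;> simp [Matrix.diagonal]

set_option maxHeartbeats 1000000 in
/-- Tr(ρ_λ·σ^z) = −(ε/μ)·tanh(βμ); if λ ≠ 0 satisfies the gap equation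
tanh(βμ) = 2μ then Tr(ρ_λ·σ^z) = −2ε. -/
theorem bcs_sigma_z_expectation
    (ε β : ℝ) (hε : ε ∈ Set.Ioo (0 : ℝ) (1 / 2)) (hβ : 0 < β) (l : ℂ) :
    Matrix.trace (ρBCS ε β l * σz) =
      (-(ε / μBCS ε l) * Real.tanh (β * μBCS ε l) : ℝ) ∧
    (l ≠ 0 → Real.tanh (β * μBCS ε l) = 2 * μBCS ε l →
      Matrix.trace (ρBCS ε β l * σz) = (-(2 * ε) : ℝ)) := by
  obtain ⟨hε0, -⟩ := hε
  have hμpos : 0 < μBCS ε l := Real.sqrt_pos.mpr (by positivity)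
  have hμ0 : ((μBCS ε l : ℝ) : ℂ) ≠ 0 := by exact_mod_cast hμpos.ne'
  have hμsq : μBCS ε l ^ 2 = ε ^ 2 + ‖l‖ ^ 2 := Real.sq_sqrt (by positivity)
  have hA : (starRingEnd ℂ l) * l = ((‖l‖ : ℝ) : ℂ) ^ 2 := by
    rw [mul_comm, Complex.mul_conj]; norm_cast; exact Complex.normSq_eq_norm_sq l
  have hμC : ((μBCS ε l : ℝ) : ℂ) ^ 2 = (ε : ℂ) ^ 2 + ((‖l‖ : ℝ) : ℂ) ^ 2 := by
    exact_mod_cast congrArg (Complex.ofReal) hμsq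
  have hcl : (starRingEnd ℂ l) * l = ((μBCS ε l : ℝ) : ℂ) ^ 2 - (ε : ℂ) ^ 2 := by
    rw [hA, hμC]; ring
  have hdpos : 0 < dBCS ε l := by unfold dBCS; positivity
  have hd0 : ((dBCS ε l : ℝ) : ℂ) ≠ 0 := by exact_mod_cast hdpos.ne'
  have hdC : ((dBCS ε l : ℝ) : ℂ)
      = ((ε : ℂ) + μBCS ε l) ^ 2 + (((μBCS ε l : ℝ) : ℂ) ^ 2 - (ε : ℂ) ^ 2) := by
    unfold dBCS; push_cast; linear_combination -hμC
  have hBC : Bmat ε l * Cmat ε l = 1 := by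
    rw [Bmat, Cmat, Matrix.mul_fin_two, Matrix.one_fin_two]
    ext i j
    fin_cases i <;> fin_cases j <;> simp <;> field_simp <;>
      first
        | linear_combination hcl - hdC
        | ring
  have hCB : Cmat ε l * Bmat ε l = 1 := by
    rw [Cmat, Bmat, Matrix.mul_fin_two, Matrix.one_fin_two]
    ext i j
    fin_cases i <;> fin_cases j <;> simp <;> field_simp <;>
      first
        | linear_combination hcl - hdC
        | ring
  set U : (Matrix (Fin 2) (Fin 2) ℂ)ˣ := ⟨Bmat ε l, Cmat ε l, hBC, hCB⟩ with hU
  set tR : ℝ := β * μBCS ε l with htR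
  set D : Matrix (Fin 2) (Fin 2) ℂ := Matrix.diagonal ![((-tR : ℝ) : ℂ), ((tR : ℝ) : ℂ)]
    with hD
  have hh : hBCS ε l = !![(ε : ℂ), -l; -(starRingEnd ℂ l), -(ε : ℂ)] := by
    unfold hBCS σz σp σm
    ext i j
    fin_cases i <;> fin_cases j <;> simp
  have hmul : (-(β : ℂ) • hBCS ε l) * Bmat ε l = Bmat ε l * D := by
    rw [hh, hD, Bmat, diag_fin_two]
    ext i j
    fin_cases i <;> fin_cases j <;>
      simp [Matrix.mul_apply, Fin.sum_univ_two, htR] <;> push_cast <;>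
      first
        | linear_combination (β : ℂ) * hcl
        | linear_combination (-(β : ℂ)) * hcl
        | ring
  have hconj : (-(β : ℂ)) • hBCS ε l = (U : Matrix (Fin 2) (Fin 2) ℂ) * D * ((U⁻¹ : (Matrix (Fin 2) (Fin 2) ℂ)ˣ) : Matrix (Fin 2) (Fin 2) ℂ) := by
    show _ = (Bmat ε l * D) * Cmat ε l
    rw [← hmul, Matrix.mul_assoc, hBC, Matrix.mul_one]
  have hexpD : NormedSpace.exp D
      = Matrix.diagonal ![((Real.exp (-tR) : ℝ) : ℂ), ((Real.exp tR : ℝ) : ℂ)] := by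
    have hv : NormedSpace.exp ![((-tR : ℝ) : ℂ), ((tR : ℝ) : ℂ)]
        = ![((Real.exp (-tR) : ℝ) : ℂ), ((Real.exp tR : ℝ) : ℂ)] := by
      rw [Pi.exp_def]
      funext i
      fin_cases i <;> simp [← Complex.exp_eq_exp_ℂ, Complex.ofReal_exp]
    rw [hD, Matrix.exp_diagonal, hv]
  have hexp : mexp (-(β : ℂ) • hBCS ε l)
      = Bmat ε l * Matrix.diagonal ![((Real.exp (-tR) : ℝ) : ℂ), ((Real.exp tR : ℝ) : ℂ)]
          * Cmat ε l := by
    rw [mexp, hconj, Matrix.exp_units_conj, hexpD]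
    rfl
  have htr : Matrix.trace (mexp (-(β : ℂ) • hBCS ε l))
      = ((Real.exp (-tR) + Real.exp tR : ℝ) : ℂ) := by
    rw [hexp, Bmat, Cmat, diag_fin_two, Matrix.mul_fin_two, Matrix.mul_fin_two,
      Matrix.trace_fin_two_of]
    push_cast
    field_simp
    linear_combination (Complex.exp (-tR) + Complex.exp tR) * hcl
      - (Complex.exp (-tR) + Complex.exp tR) * hdC
  have htrz : Matrix.trace (mexp (-(β : ℂ) • hBCS ε l) * σz)
      = (((Real.exp (-tR) - Real.exp tR) * (ε / μBCS ε l) : ℝ) : ℂ) := by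
    rw [hexp, Bmat, Cmat, σz, diag_fin_two, Matrix.mul_fin_two, Matrix.mul_fin_two,
      Matrix.mul_fin_two, Matrix.trace_fin_two_of]
    push_cast
    field_simp
    linear_combination (-(Complex.exp (-tR) - Complex.exp tR) * ((μBCS ε l : ℝ) : ℂ)) * hcl
      + (-(Complex.exp (-tR) - Complex.exp tR) * (ε : ℂ)) * hdC
  have hfinal : Matrix.trace (ρBCS ε β l * σz)
      = (((Real.exp (-tR) + Real.exp tR)⁻¹
          * ((Real.exp (-tR) - Real.exp tR) * (ε / μBCS ε l)) : ℝ) : ℂ) := by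
    unfold ρBCS
    rw [smul_mul_assoc, Matrix.trace_smul, htr, htrz, smul_eq_mul]
    push_cast
    ring
  have habpos : 0 < Real.exp (-tR) + Real.exp tR := by positivity
  have hreal : (Real.exp (-tR) + Real.exp tR)⁻¹
      * ((Real.exp (-tR) - Real.exp tR) * (ε / μBCS ε l))
      = -(ε / μBCS ε l) * Real.tanh tR := by
    rw [Real.tanh_eq_sinh_div_cosh, Real.sinh_eq, Real.cosh_eq]
    field_simp
    ring
  constructor
  · rw [hfinal, hreal]
  · intro _ hgap
    rw [hfinal, hreal, hgap]
    norm_cast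
    field_simp
end

section
/- For every t ∈ ℝ, the Heisenberg time evolution acts on the Goldstone pair as a harmonic rotation with doubled frequency 2μ: exp(it·h_λ)·σ̂^z·exp(−it·h_λ) = cos(2μt)·σ̂^z + sin(2μt)·Jσ̂^z and exp(it·h_λ)·Jσ̂^z·exp(−it·h_λ) = −sin(2μt)·σ̂^z + cos(2μt)·Jσ̂^z. -/
open Matrix

open Nat in
private lemma exp_smul_of_idem' {A : Type*} [NormedRing A] [NormedAlgebra ℂ A] [CompleteSpace A]
    (P : A) (hP : P * P = P) (c : ℂ) :
    NormedSpace.exp (c • P) = 1 + (Complex.exp c - 1) • P := by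
  have hPn : ∀ n : ℕ, P ^ (n + 1) = P := by
    intro n; induction n with
    | zero => simp
    | succ n ih => rw [pow_succ, ih, hP]
  have hsum : Summable fun n : ℕ => ((n ! : ℂ))⁻¹ • (c • P) ^ n :=
    NormedSpace.expSeries_summable' (𝕂 := ℂ) (c • P)
  have hsumC : Summable fun n : ℕ => ((n ! : ℂ))⁻¹ • c ^ n :=
    NormedSpace.expSeries_summable' (𝕂 := ℂ) c
  have hsumC' : Summable fun n : ℕ => (((n + 1) ! : ℂ))⁻¹ * c ^ (n + 1) := by
    have := (summable_nat_add_iff 1).mpr hsumC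
    simpa [smul_eq_mul] using this
  have h1 : ∀ n : ℕ, (((n + 1) ! : ℂ))⁻¹ • (c • P) ^ (n + 1)
      = ((((n + 1) ! : ℂ))⁻¹ * c ^ (n + 1)) • P := by
    intro n; rw [smul_pow, hPn, smul_smul]
  have hec : Complex.exp c = 1 + ∑' n : ℕ, (((n + 1) ! : ℂ))⁻¹ * c ^ (n + 1) := by
    rw [Complex.exp_eq_exp_ℂ, NormedSpace.exp_eq_tsum ℂ]
    beta_reduce
    rw [Summable.tsum_eq_zero_add hsumC]
    simp [smul_eq_mul]
  rw [NormedSpace.exp_eq_tsum ℂ]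
  beta_reduce
  rw [Summable.tsum_eq_zero_add hsum]
  simp only [h1]
  rw [Summable.tsum_smul_const hsumC', hec]
  simp

private lemma exp_smul_of_idem (P : Matrix (Fin 2) (Fin 2) ℂ) (hP : P * P = P) (c : ℂ) :
    NormedSpace.exp (c • P) = 1 + (Complex.exp c - 1) • P := by
  letI : SeminormedRing (Matrix (Fin 2) (Fin 2) ℂ) := Matrix.linftyOpSemiNormedRing
  letI : NormedRing (Matrix (Fin 2) (Fin 2) ℂ) := Matrix.linftyOpNormedRing
  letI : NormedAlgebra ℂ (Matrix (Fin 2) (Fin 2) ℂ) := Matrix.linftyOpNormedAlgebra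
  exact exp_smul_of_idem' P hP c

private lemma conj_key (P Q F : Matrix (Fin 2) (Fin 2) ℂ) (a b : ℂ)
    (hPF : P * F = F) (hQF : Q * F = 0) (hFP : F * P = 0) (hFQ : F * Q = F) :
    (a • P + b • Q) * F * (b • P + a • Q) = (a * a) • F := by
  rw [add_mul, Matrix.smul_mul, Matrix.smul_mul, hPF, hQF, smul_zero, add_zero,
      Matrix.smul_mul, Matrix.mul_add, Matrix.mul_smul, Matrix.mul_smul, hFP, hFQ,
      smul_zero, zero_add, smul_smul]


private lemma hBCS_eq (ε : ℝ) (l : ℂ) : hBCS ε l = !![(ε : ℂ), -l; -(starRingEnd ℂ l), -(ε : ℂ)] := by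
  ext i j
  fin_cases i <;> fin_cases j <;> simp [hBCS, σz, σp, σm]

private lemma h_sq (ε : ℝ) (l : ℂ) : hBCS ε l * hBCS ε l = ((μBCS ε l : ℂ) ^ 2) • 1 := by
  have h0 : (0 : ℝ) ≤ ε ^ 2 + ‖l‖ ^ 2 := by positivity
  have hs : (μBCS ε l) ^ 2 = ε ^ 2 + ‖l‖ ^ 2 := Real.sq_sqrt h0
  have hμ : ((μBCS ε l : ℂ)) ^ 2 = (ε : ℂ) ^ 2 + l * starRingEnd ℂ l := by
    calc ((μBCS ε l : ℂ)) ^ 2 = ((μBCS ε l ^ 2 : ℝ) : ℂ) := by push_cast; ring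
    _ = ((ε ^ 2 + ‖l‖ ^ 2 : ℝ) : ℂ) := by rw [hs]
    _ = (ε : ℂ) ^ 2 + l * starRingEnd ℂ l := by
        push_cast
        rw [Complex.mul_conj']
  rw [hBCS_eq, hμ]
  ext i j
  fin_cases i <;> fin_cases j <;>
    simp [Matrix.mul_apply, Fin.sum_univ_two, Matrix.one_apply] <;> ring

/-- the Heisenberg time evolution acts on the Goldstone pair as a harmonic
rotation with doubled frequency 2μ:
exp(ith_λ)·σ̂^z·exp(−ith_λ) = cos(2μt)·σ̂^z + sin(2μt)·Jσ̂^z and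
exp(ith_λ)·Jσ̂^z·exp(−ith_λ) = −sin(2μt)·σ̂^z + cos(2μt)·Jσ̂^z. -/
theorem bcs_heisenberg_evolution_of_goldstone_pair
    (ε : ℝ) (hε : ε ∈ Set.Ioo (0 : ℝ) (1 / 2)) (l : ℂ) (t : ℝ) :
    mexp ((Complex.I * t) • hBCS ε l) * σhat ε l * mexp ((-(Complex.I * t)) • hBCS ε l) =
      ((Real.cos (2 * μBCS ε l * t) : ℂ)) • σhat ε l +
        ((Real.sin (2 * μBCS ε l * t) : ℂ)) • Jσhat ε l ∧
    mexp ((Complex.I * t) • hBCS ε l) * Jσhat ε l * mexp ((-(Complex.I * t)) • hBCS ε l) =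
      (-(Real.sin (2 * μBCS ε l * t) : ℂ)) • σhat ε l +
        ((Real.cos (2 * μBCS ε l * t) : ℂ)) • Jσhat ε l := by
  obtain ⟨hε0, -⟩ := hε
  have hμpos : 0 < μBCS ε l := Real.sqrt_pos.mpr (by positivity)
  set ν : ℂ := (μBCS ε l : ℂ) with hνdef
  have hν0 : ν ≠ 0 := by
    rw [hνdef]
    exact_mod_cast ne_of_gt hμpos
  set k : Matrix (Fin 2) (Fin 2) ℂ := ν⁻¹ • hBCS ε l with hkdef
  have hkk : k * k = 1 := by
    rw [hkdef, Matrix.smul_mul, Matrix.mul_smul, h_sq, ← hνdef, smul_smul, smul_smul,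
        show ν⁻¹ * ν⁻¹ * ν ^ 2 = 1 by field_simp, one_smul]
  have hP : Pplus ε l = (1 / 2 : ℂ) • (1 + k) := by
    simp only [Pplus]
    rfl
  have hQ : Pminus ε l = (1 / 2 : ℂ) • (1 - k) := by
    simp only [Pminus]
    rfl
  have hPP : Pplus ε l * Pplus ε l = Pplus ε l := by
    rw [hP, Matrix.smul_mul, Matrix.mul_smul, smul_smul,
        show (1 + k) * (1 + k) = 1 + k + (k + k * k) from by noncomm_ring, hkk]
    module
  have hQQ : Pminus ε l * Pminus ε l = Pminus ε l := by
    rw [hQ, Matrix.smul_mul, Matrix.mul_smul, smul_smul,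
        show (1 - k) * (1 - k) = 1 + k * k - (k + k) from by noncomm_ring, hkk]
    module
  have hPQ : Pplus ε l * Pminus ε l = 0 := by
    rw [hP, hQ, Matrix.smul_mul, Matrix.mul_smul, smul_smul,
        show (1 + k) * (1 - k) = 1 - k * k + (k - k) from by noncomm_ring, hkk]
    simp
  have hQP : Pminus ε l * Pplus ε l = 0 := by
    rw [hQ, hP, Matrix.smul_mul, Matrix.mul_smul, smul_smul,
        show (1 - k) * (1 + k) = 1 - k * k + (k - k) from by noncomm_ring, hkk]
    simp
  have hsum1 : Pplus ε l + Pminus ε l = 1 := by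
    rw [hP, hQ]; module
  have hh : hBCS ε l = ν • k := by
    rw [hkdef, smul_smul, mul_inv_cancel₀ hν0, one_smul]
  have hdecomp : ∀ s : ℂ, s • hBCS ε l = (s * ν) • Pplus ε l + (-(s * ν)) • Pminus ε l := by
    intro s
    rw [hh, hP, hQ, smul_smul, smul_smul, smul_smul]
    module
  have hcomm : ∀ a b : ℂ, Commute (a • Pplus ε l) (b • Pminus ε l) := by
    intro a b
    unfold Commute SemiconjBy
    rw [Matrix.smul_mul, Matrix.mul_smul, Matrix.smul_mul, Matrix.mul_smul, hPQ, hQP]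
    simp
  have hU : ∀ s : ℂ, mexp (s • hBCS ε l)
      = Complex.exp (s * ν) • Pplus ε l + Complex.exp (-(s * ν)) • Pminus ε l := by
    intro s
    simp only [mexp]
    rw [hdecomp s, Matrix.exp_add_of_commute _ _ (hcomm _ _),
        exp_smul_of_idem _ hPP, exp_smul_of_idem _ hQQ]
    rw [mul_add, mul_one, add_mul, one_mul, Matrix.smul_mul, Matrix.mul_smul, smul_smul, hPQ,
        smul_zero, add_zero,
        show (1 : Matrix (Fin 2) (Fin 2) ℂ) = Pplus ε l + Pminus ε l from hsum1.symm]
    module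
  set a : ℂ := Complex.exp (Complex.I * (t : ℂ) * ν) with hadef
  set b : ℂ := Complex.exp (-(Complex.I * (t : ℂ) * ν)) with hbdef
  have hU1 : mexp ((Complex.I * (t : ℂ)) • hBCS ε l) = a • Pplus ε l + b • Pminus ε l := by
    rw [hU]
  have hU2 : mexp ((-(Complex.I * (t : ℂ))) • hBCS ε l) = b • Pplus ε l + a • Pminus ε l := by
    rw [hU, neg_mul, neg_neg]
  have haa : a * a = ((Real.cos (2 * μBCS ε l * t) : ℂ))
      + ((Real.sin (2 * μBCS ε l * t) : ℂ)) * Complex.I := by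
    rw [hadef, ← Complex.exp_add,
        show Complex.I * (t : ℂ) * ν + Complex.I * (t : ℂ) * ν
          = ((2 * μBCS ε l * t : ℝ) : ℂ) * Complex.I by rw [hνdef]; push_cast; ring,
        Complex.exp_mul_I, Complex.ofReal_cos, Complex.ofReal_sin]
  have hbb : b * b = ((Real.cos (2 * μBCS ε l * t) : ℂ))
      - ((Real.sin (2 * μBCS ε l * t) : ℂ)) * Complex.I := by
    rw [hbdef, ← Complex.exp_add,
        show -(Complex.I * (t : ℂ) * ν) + -(Complex.I * (t : ℂ) * ν)
          = (-((2 * μBCS ε l * t : ℝ) : ℂ)) * Complex.I by rw [hνdef]; push_cast; ring,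
        Complex.exp_mul_I, Complex.cos_neg, Complex.sin_neg, Complex.ofReal_cos,
        Complex.ofReal_sin, neg_mul]
    ring
  have hF : Eplus ε l σz = Pplus ε l * σz * Pminus ε l := rfl
  have hG : Eminus ε l σz = Pminus ε l * σz * Pplus ε l := rfl
  have hPF : Pplus ε l * Eplus ε l σz = Eplus ε l σz := by
    rw [hF, ← Matrix.mul_assoc, ← Matrix.mul_assoc, hPP]
  have hQF : Pminus ε l * Eplus ε l σz = 0 := by
    rw [hF, ← Matrix.mul_assoc, ← Matrix.mul_assoc, hQP, Matrix.zero_mul, Matrix.zero_mul]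
  have hFP : Eplus ε l σz * Pplus ε l = 0 := by
    rw [hF, Matrix.mul_assoc, hQP, Matrix.mul_zero]
  have hFQ : Eplus ε l σz * Pminus ε l = Eplus ε l σz := by
    rw [hF, Matrix.mul_assoc, hQQ]
  have hQG : Pminus ε l * Eminus ε l σz = Eminus ε l σz := by
    rw [hG, ← Matrix.mul_assoc, ← Matrix.mul_assoc, hQQ]
  have hPG : Pplus ε l * Eminus ε l σz = 0 := by
    rw [hG, ← Matrix.mul_assoc, ← Matrix.mul_assoc, hPQ, Matrix.zero_mul, Matrix.zero_mul]
  have hGQ : Eminus ε l σz * Pminus ε l = 0 := by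
    rw [hG, Matrix.mul_assoc, hPQ, Matrix.mul_zero]
  have hGP : Eminus ε l σz * Pplus ε l = Eminus ε l σz := by
    rw [hG, Matrix.mul_assoc, hPP]
  have conj1 : (a • Pplus ε l + b • Pminus ε l) * Eplus ε l σz
      * (b • Pplus ε l + a • Pminus ε l) = (a * a) • Eplus ε l σz :=
    conj_key _ _ _ a b hPF hQF hFP hFQ
  have conj2 : (a • Pplus ε l + b • Pminus ε l) * Eminus ε l σz
      * (b • Pplus ε l + a • Pminus ε l) = (b * b) • Eminus ε l σz := by
    have := conj_key (Pminus ε l) (Pplus ε l) (Eminus ε l σz) b a hQG hPG hGQ hGP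
    rwa [add_comm (b • Pminus ε l), add_comm (a • Pminus ε l)] at this
  constructor
  · simp only [σhat, Jσhat, Jmap]
    rw [mul_add, add_mul, hU1, hU2, conj1, conj2, haa, hbb]
    module
  · simp only [σhat, Jσhat, Jmap]
    rw [Matrix.mul_smul, Matrix.smul_mul, Matrix.mul_sub, sub_mul, hU1, hU2, conj1, conj2,
        haa, hbb]
    match_scalars <;>
      linear_combination Complex.sin (2 * (μBCS ε l : ℂ) * (t : ℂ)) * Complex.I_sq
end

section
/- Duhamel–commutator identity: let n be a nonempty finite type, H a self-adjoint matrix in Matrix n n ℂ, β > 0, and ρ = exp(−βH)/Tr(exp(−βH)). Then for all A, C ∈ Matrix n n ℂ: ∫₀^β Tr(ρ·A·exp(−uH)·(HC − CH)·exp(uH)) du = Tr(ρ·(AC − CA)). (That is, β·(A*, [H,C])_∼ = ω([A*,C]) where (·,·)_∼ is the Duhamel two-point function.) -/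
open Matrix

attribute [local instance] Matrix.linftyOpNormedRing Matrix.linftyOpNormedAlgebra

section DuhamelAux

open NormedSpace

variable {n : Type*} [Fintype n] [DecidableEq n]

lemma hasDerivAt_exp_real_aux (M : Matrix n n ℂ) (u : ℝ) :
    HasDerivAt (fun u : ℝ => exp ((u : ℂ) • M)) (M * exp ((u : ℂ) • M)) u := by
  have h := hasDerivAt_exp_smul_const' M (u : ℂ)
  have := (h.hasFDerivAt.restrictScalars ℝ).comp_hasDerivAt u Complex.ofRealCLM.hasDerivAt
  simp at this
  exact this

lemma hasDerivAt_exp_real_neg_aux (M : Matrix n n ℂ) (u : ℝ) :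
    HasDerivAt (fun u : ℝ => exp ((-(u : ℂ)) • M)) (-(M * exp ((-(u : ℂ)) • M))) u := by
  have h := (hasDerivAt_exp_real_aux M (-u)).scomp u (hasDerivAt_neg u)
  simp [neg_one_smul, Function.comp_def] at h ⊢
  exact h

lemma cont_exp_real_aux (M : Matrix n n ℂ) : Continuous (fun u : ℝ => exp ((u : ℂ) • M)) :=
  exp_continuous.comp ((Complex.continuous_ofReal).smul continuous_const)

lemma cont_exp_real_neg_aux (M : Matrix n n ℂ) :
    Continuous (fun u : ℝ => exp ((-(u : ℂ)) • M)) :=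
  exp_continuous.comp (((Complex.continuous_ofReal).neg).smul continuous_const)

noncomputable def traceCLMAux : Matrix n n ℂ →L[ℂ] ℂ :=
  LinearMap.toContinuousLinearMap (Matrix.traceLinearMap n ℂ ℂ)

omit [DecidableEq n] in
lemma traceCLMAux_apply (M : Matrix n n ℂ) : traceCLMAux M = M.trace := rfl

end DuhamelAux

/-- Duhamel–commutator identity: for self-adjoint H, β > 0 and the Gibbs
density matrix ρ = exp(−βH)/Tr(exp(−βH)), for all A, C:
∫₀^β Tr(ρ·A·exp(−uH)·(HC − CH)·exp(uH)) du = Tr(ρ·(AC − CA)). -/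
theorem duhamel_commutator_identity
    (n : Type*) [Fintype n] [DecidableEq n] [Nonempty n]
    (H : Matrix n n ℂ) (hH : H.IsHermitian) (β : ℝ) (hβ : 0 < β)
    (ρ : Matrix n n ℂ)
    (hρ : ρ = (Matrix.trace (NormedSpace.exp ((-(β : ℂ)) • H)))⁻¹ •
      NormedSpace.exp ((-(β : ℂ)) • H))
    (A C : Matrix n n ℂ) :
    (∫ u in (0 : ℝ)..β,
        Matrix.trace (ρ * A * NormedSpace.exp ((-(u : ℂ)) • H) * (H * C - C * H) *
          NormedSpace.exp ((u : ℂ) • H))) =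
      Matrix.trace (ρ * (A * C - C * A)) := by
  have hcomm : ∀ u : ℝ,
      H * NormedSpace.exp ((-(u : ℂ)) • H) = NormedSpace.exp ((-(u : ℂ)) • H) * H := fun u =>
    (((Commute.refl H).smul_right (-(u : ℂ))).exp_right).eq
  have hderiv : ∀ u : ℝ,
      HasDerivAt (fun u : ℝ => -Matrix.trace (ρ * A * NormedSpace.exp ((-(u : ℂ)) • H) * C *
          NormedSpace.exp ((u : ℂ) • H)))
        (Matrix.trace (ρ * A * NormedSpace.exp ((-(u : ℂ)) • H) * (H * C - C * H) *
          NormedSpace.exp ((u : ℂ) • H))) u := by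
    intro u
    set Fu := NormedSpace.exp ((-(u : ℂ)) • H)
    set Eu := NormedSpace.exp ((u : ℂ) • H)
    have h1 : HasDerivAt (fun u : ℝ => ρ * A * NormedSpace.exp ((-(u : ℂ)) • H) * C *
        NormedSpace.exp ((u : ℂ) • H))
        ((ρ * A * -(H * Fu) * C) * Eu + (ρ * A * Fu * C) * (H * Eu)) u :=
      ((((hasDerivAt_exp_real_neg_aux H u).const_mul (ρ * A)).mul_const C).mul
        (hasDerivAt_exp_real_aux H u))
    have h2 := ((traceCLMAux (n := n)).hasFDerivAt.restrictScalars ℝ).comp_hasDerivAt u h1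
    have h3 := h2.neg
    convert h3 using 1
    · rfl
    · rfl
    change _ = -Matrix.trace _
    rw [← Matrix.trace_neg]
    congr 1
    have step1 : ρ * A * Fu * (H * C - C * H) * Eu
        = ρ * A * (Fu * H) * C * Eu - ρ * A * Fu * C * H * Eu := by noncomm_ring
    rw [step1, ← hcomm u]
    noncomm_ring
  have hcont : Continuous fun u : ℝ =>
      Matrix.trace (ρ * A * NormedSpace.exp ((-(u : ℂ)) • H) * (H * C - C * H) *
        NormedSpace.exp ((u : ℂ) • H)) := by
    have : Continuous fun u : ℝ =>
        ρ * A * NormedSpace.exp ((-(u : ℂ)) • H) * (H * C - C * H) *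
          NormedSpace.exp ((u : ℂ) • H) :=
      (((continuous_const.mul (cont_exp_real_neg_aux H)).mul continuous_const).mul
        (cont_exp_real_aux H))
    exact (traceCLMAux (n := n)).continuous.comp this
  have key := intervalIntegral.integral_eq_sub_of_hasDerivAt
    (f := fun u : ℝ => -Matrix.trace (ρ * A * NormedSpace.exp ((-(u : ℂ)) • H) * C *
      NormedSpace.exp ((u : ℂ) • H)))
    (fun u _ => hderiv u) (hcont.intervalIntegrable 0 β)
  rw [key]
  have hEF : NormedSpace.exp ((β : ℂ) • H) * NormedSpace.exp ((-(β : ℂ)) • H) = 1 := by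
    refine (NormedSpace.exp_add_of_commute (((Commute.refl H).smul_left _).smul_right _)).symm.trans ?_
    rw [show (β : ℂ) • H + (-(β : ℂ)) • H = 0 by rw [← add_smul]; simp]
    exact NormedSpace.exp_zero
  have hend : Matrix.trace (ρ * A * NormedSpace.exp ((-(β : ℂ)) • H) * C *
      NormedSpace.exp ((β : ℂ) • H)) = Matrix.trace (ρ * (C * A)) := by
    rw [hρ]
    simp only [smul_mul_assoc, Matrix.trace_smul]
    congr 1
    rw [Matrix.trace_mul_comm (NormedSpace.exp ((-(β : ℂ)) • H) * A *
      NormedSpace.exp ((-(β : ℂ)) • H) * C) (NormedSpace.exp ((β : ℂ) • H))]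
    rw [show NormedSpace.exp ((β : ℂ) • H) * (NormedSpace.exp ((-(β : ℂ)) • H) * A *
        NormedSpace.exp ((-(β : ℂ)) • H) * C)
        = (NormedSpace.exp ((β : ℂ) • H) * NormedSpace.exp ((-(β : ℂ)) • H)) *
          (A * NormedSpace.exp ((-(β : ℂ)) • H) * C) by noncomm_ring]
    rw [hEF, one_mul, Matrix.trace_mul_cycle, ← mul_assoc, Matrix.trace_mul_comm, mul_assoc]
  rw [hend]
  simp only [Complex.ofReal_zero, zero_smul, neg_zero, NormedSpace.exp_zero, mul_one]
  rw [Matrix.mul_sub, Matrix.trace_sub, mul_assoc]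
  ring
end

section
/- Bogoliubov inequality: let n be a nonempty finite type, H a self-adjoint matrix in Matrix n n ℂ, β > 0, and ρ = exp(−βH)/Tr(exp(−βH)). Then for all A, B ∈ Matrix n n ℂ: the Duhamel two-point function (B,B)_∼ is a nonnegative real number, Tr(ρ·[Aᴴ,[H,A]]) is a nonnegative real number, and |Tr(ρ·[Aᴴ,B])|² ≤ β · Tr(ρ·[Aᴴ,[H,A]]) · (B,B)_∼. -/
open Matrix

private lemma trace_diag4 {n : Type*} [Fintype n] [DecidableEq n]
    (a b : n → ℂ) (X Y : Matrix n n ℂ) :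
    Matrix.trace (Matrix.diagonal a * X * Matrix.diagonal b * Y)
      = ∑ i, ∑ j, a i * X i j * b j * Y j i := by
  have hP : ∀ i j, (Matrix.diagonal a * X * Matrix.diagonal b) i j = a i * X i j * b j := by
    intro i j; simp [Matrix.mul_diagonal, Matrix.diagonal_mul]
  calc Matrix.trace (Matrix.diagonal a * X * Matrix.diagonal b * Y)
      = ∑ i, ∑ j, (Matrix.diagonal a * X * Matrix.diagonal b) i j * Y j i := by
        simp [Matrix.trace, Matrix.mul_apply]
    _ = ∑ i, ∑ j, a i * X i j * b j * Y j i :=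
        Finset.sum_congr rfl fun i _ => Finset.sum_congr rfl fun j _ => by rw [hP]

private lemma trace_sandwich {n : Type*} [Fintype n] [DecidableEq n]
    {U : Matrix n n ℂ} (hU : Uᴴ * U = 1) (hU' : U * Uᴴ = 1)
    (a b : n → ℂ) (X Y : Matrix n n ℂ) :
    Matrix.trace ((U * Matrix.diagonal a * Uᴴ) * X * (U * Matrix.diagonal b * Uᴴ) * Y)
      = ∑ i, ∑ j, a i * (Uᴴ * X * U) i j * b j * (Uᴴ * Y * U) j i := by
  have h : (U * Matrix.diagonal a * Uᴴ) * X * (U * Matrix.diagonal b * Uᴴ) * Y * U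
      = U * (Matrix.diagonal a * (Uᴴ * X * U) * Matrix.diagonal b * (Uᴴ * Y * U)) := by
    simp only [Matrix.mul_assoc]
  have h2 : (U * Matrix.diagonal a * Uᴴ) * X * (U * Matrix.diagonal b * Uᴴ) * Y
      = U * (Matrix.diagonal a * (Uᴴ * X * U) * Matrix.diagonal b * (Uᴴ * Y * U)) * Uᴴ := by
    rw [← h, Matrix.mul_assoc _ U Uᴴ, hU', mul_one]
  rw [h2, Matrix.trace_mul_cycle, ← Matrix.mul_assoc, hU, one_mul, trace_diag4]

private lemma sandwich_mul {n : Type*} [Fintype n] [DecidableEq n]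
    {U : Matrix n n ℂ} (hU : Uᴴ * U = 1) (a b : n → ℂ) :
    (U * Matrix.diagonal a * Uᴴ) * (U * Matrix.diagonal b * Uᴴ)
      = U * Matrix.diagonal (fun i => a i * b i) * Uᴴ := by
  have : Matrix.diagonal a * (Uᴴ * U * (Matrix.diagonal b * Uᴴ))
      = Matrix.diagonal (fun i => a i * b i) * Uᴴ := by
    rw [hU, one_mul, ← Matrix.mul_assoc, Matrix.diagonal_mul_diagonal]
  calc (U * Matrix.diagonal a * Uᴴ) * (U * Matrix.diagonal b * Uᴴ)
      = U * (Matrix.diagonal a * (Uᴴ * U * (Matrix.diagonal b * Uᴴ))) := by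
        simp only [Matrix.mul_assoc]
    _ = U * (Matrix.diagonal (fun i => a i * b i) * Uᴴ) := by rw [this]
    _ = U * Matrix.diagonal (fun i => a i * b i) * Uᴴ := by rw [Matrix.mul_assoc]

private lemma exp_real_smul {n : Type*} [Fintype n] [DecidableEq n]
    {H U : Matrix n n ℂ} {E : n → ℝ}
    (hU : Uᴴ * U = 1) (hU' : U * Uᴴ = 1)
    (hspec : H = U * Matrix.diagonal (fun i => (E i : ℂ)) * Uᴴ) (t : ℝ) :
    NormedSpace.exp ((t : ℂ) • H)
      = U * Matrix.diagonal (fun i => (Real.exp (t * E i) : ℂ)) * Uᴴ := by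
  have hUnit : IsUnit U := ⟨⟨U, Uᴴ, hU', hU⟩, rfl⟩
  have hinv : U⁻¹ = Uᴴ := Matrix.inv_eq_right_inv hU'
  have h1 : (t : ℂ) • H = U * Matrix.diagonal (fun i => (t : ℂ) * (E i : ℂ)) * U⁻¹ := by
    rw [hinv, hspec]
    rw [show (Matrix.diagonal fun i => (t:ℂ) * (E i:ℂ)) = (t:ℂ) • Matrix.diagonal (fun i => (E i : ℂ)) from by
      rw [← Matrix.diagonal_smul]; rfl]
    simp [Matrix.mul_smul, Matrix.smul_mul]
  rw [h1, Matrix.exp_conj U (Matrix.diagonal fun i => (t:ℂ) * (E i:ℂ)) hUnit,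
    Matrix.exp_diagonal, hinv]
  congr 2
  funext i
  rw [Pi.exp_def, ← Complex.exp_eq_exp_ℂ]
  push_cast
  rfl

/-- the basic exponential integral -/
private lemma expInt_key (β x y : ℝ) :
    (y - x) * (∫ u in (0:ℝ)..β, Real.exp (u * (x - y) - β * x))
      = Real.exp (-β * x) - Real.exp (-β * y) := by
  set c : ℝ := x - y with hc
  have hd : ∀ u : ℝ, HasDerivAt (fun v : ℝ => Real.exp (v * c - β * x))
      (Real.exp (u * c - β * x) * c) u := by
    intro u
    have h1 : HasDerivAt (fun v : ℝ => v * c - β * x) c u :=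
      (hasDerivAt_mul_const c).sub_const (β * x)
    exact h1.exp
  have hint : ∫ u in (0:ℝ)..β, Real.exp (u * c - β * x) * c
      = Real.exp (β * c - β * x) - Real.exp (0 * c - β * x) := by
    apply intervalIntegral.integral_eq_sub_of_hasDerivAt (fun u _ => hd u)
    exact ((Real.continuous_exp.comp (by continuity)).mul continuous_const).intervalIntegrable 0 β
  have h2 : (∫ u in (0:ℝ)..β, Real.exp (u * c - β * x)) * c
      = Real.exp (β * c - β * x) - Real.exp (0 * c - β * x) := by
    rw [← hint, ← intervalIntegral.integral_mul_const]
  have e1 : β * c - β * x = -β * y := by rw [hc]; ring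
  have e2 : (0:ℝ) * c - β * x = -β * x := by ring
  rw [e1, e2] at h2
  calc (y - x) * (∫ u in (0:ℝ)..β, Real.exp (u * (x - y) - β * x))
      = -((∫ u in (0:ℝ)..β, Real.exp (u * c - β * x)) * c) := by rw [hc]; ring
    _ = Real.exp (-β * x) - Real.exp (-β * y) := by rw [h2]; ring

private lemma expInt_symm (β x y : ℝ) :
    (∫ u in (0:ℝ)..β, Real.exp (u * (x - y) - β * x))
      = ∫ u in (0:ℝ)..β, Real.exp (u * (y - x) - β * y) := by
  have h : (∫ u in (0:ℝ)..β, Real.exp ((β - u) * (x - y) - β * x))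
      = ∫ u in (β - β)..(β - 0), Real.exp (u * (x - y) - β * x) :=
    intervalIntegral.integral_comp_sub_left (fun u => Real.exp (u * (x - y) - β * x)) β
  rw [sub_self, sub_zero] at h
  rw [← h]
  exact intervalIntegral.integral_congr (fun u _ => by congr 1; ring)

/-- The Duhamel two-point function
(A,B)_∼ = (1/β)·∫₀^β Tr(ρ·Aᴴ·exp(−uH)·B·exp(uH)) du. -/
noncomputable def duhamel {n : Type*} [Fintype n] [DecidableEq n]
    (H : Matrix n n ℂ) (β : ℝ) (ρ : Matrix n n ℂ) (A B : Matrix n n ℂ) : ℂ :=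
  (1 / (β : ℂ)) * ∫ u in (0 : ℝ)..β,
    Matrix.trace (ρ * Aᴴ * NormedSpace.exp ((-(u : ℂ)) • H) * B *
      NormedSpace.exp ((u : ℂ) • H))

set_option maxHeartbeats 1000000 in
/-- Bogoliubov inequality: for self-adjoint H, β > 0 and the Gibbs density
matrix ρ = exp(−βH)/Tr(exp(−βH)), for all A, B: the Duhamel two-point function (B,B)_∼ is a
nonnegative real number, Tr(ρ·[Aᴴ,[H,A]]) is a nonnegative real number, and
|Tr(ρ·[Aᴴ,B])|² ≤ β · Tr(ρ·[Aᴴ,[H,A]]) · (B,B)_∼. -/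
theorem bogoliubov_inequality
    (n : Type*) [Fintype n] [DecidableEq n] [Nonempty n]
    (H : Matrix n n ℂ) (hH : H.IsHermitian) (β : ℝ) (hβ : 0 < β)
    (ρ : Matrix n n ℂ)
    (hρ : ρ = (Matrix.trace (NormedSpace.exp ((-(β : ℂ)) • H)))⁻¹ •
      NormedSpace.exp ((-(β : ℂ)) • H))
    (A B : Matrix n n ℂ) :
    (duhamel H β ρ B B).im = 0 ∧ 0 ≤ (duhamel H β ρ B B).re ∧
    (Matrix.trace (ρ * (Aᴴ * (H * A - A * H) - (H * A - A * H) * Aᴴ))).im = 0 ∧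
    0 ≤ (Matrix.trace (ρ * (Aᴴ * (H * A - A * H) - (H * A - A * H) * Aᴴ))).re ∧
    ‖Matrix.trace (ρ * (Aᴴ * B - B * Aᴴ))‖ ^ 2 ≤
      β * (Matrix.trace (ρ * (Aᴴ * (H * A - A * H) - (H * A - A * H) * Aᴴ))).re *
        (duhamel H β ρ B B).re := by
  classical
  set U : Matrix n n ℂ := (hH.eigenvectorUnitary : Matrix n n ℂ) with hUdef
  set E : n → ℝ := hH.eigenvalues with hEdef
  have hU : Uᴴ * U = 1 := by
    rw [← Matrix.star_eq_conjTranspose]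
    exact (Matrix.mem_unitaryGroup_iff').mp hH.eigenvectorUnitary.2
  have hU' : U * Uᴴ = 1 := by
    rw [← Matrix.star_eq_conjTranspose]
    exact (Matrix.mem_unitaryGroup_iff).mp hH.eigenvectorUnitary.2
  have hspec : H = U * Matrix.diagonal (fun i => (E i : ℂ)) * Uᴴ := by
    exact hH.spectral_theorem
  have hexp : ∀ t : ℝ, NormedSpace.exp ((t : ℂ) • H)
      = U * Matrix.diagonal (fun i => (Real.exp (t * E i) : ℂ)) * Uᴴ :=
    exp_real_smul hU hU' hspec
  set Zr : ℝ := ∑ i, Real.exp (-β * E i) with hZrdef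
  have hZrpos : 0 < Zr :=
    Finset.sum_pos (fun i _ => Real.exp_pos _) Finset.univ_nonempty
  have hZ : Matrix.trace (NormedSpace.exp ((-(β : ℂ)) • H)) = (Zr : ℂ) := by
    rw [show (-(β:ℂ)) = ((-β : ℝ) : ℂ) from by push_cast; ring, hexp (-β),
      Matrix.trace_mul_cycle, hU, one_mul, Matrix.trace_diagonal]
    push_cast [hZrdef]
    rfl
  have hρ' : ρ = ((Zr : ℂ))⁻¹ •
      (U * Matrix.diagonal (fun i => (Real.exp (-β * E i) : ℂ)) * Uᴴ) := by
    rw [hρ, hZ, show (-(β:ℂ)) = ((-β : ℝ) : ℂ) from by push_cast; ring, hexp (-β)]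
  set W : n → n → ℝ := fun i j => ∫ u in (0:ℝ)..β, Real.exp (u * (E i - E j) - β * E i)
    with hWdef
  have hWpos : ∀ i j, 0 < W i j := by
    intro i j
    exact intervalIntegral.intervalIntegral_pos_of_pos
      ((Real.continuous_exp.comp (by fun_prop)).intervalIntegrable 0 β)
      (fun u => Real.exp_pos _) hβ
  have hWkey : ∀ i j, (E j - E i) * W i j = Real.exp (-β * E i) - Real.exp (-β * E j) :=
    fun i j => expInt_key β (E i) (E j)
  set A' : Matrix n n ℂ := Uᴴ * A * U with hA'def
  set B' : Matrix n n ℂ := Uᴴ * B * U with hB'def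
  have hBH : Uᴴ * Bᴴ * U = B'ᴴ := by
    rw [hB'def]
    simp [Matrix.conjTranspose_mul, Matrix.mul_assoc]
  have hAH : Uᴴ * Aᴴ * U = A'ᴴ := by
    rw [hA'def]
    simp [Matrix.conjTranspose_mul, Matrix.mul_assoc]
  -- the duhamel integrand
  have hint : ∀ u : ℝ,
      Matrix.trace (ρ * Bᴴ * NormedSpace.exp ((-(u:ℂ)) • H) * B
          * NormedSpace.exp ((u:ℂ) • H))
        = (↑Zr)⁻¹ * ∑ p : n × n, (starRingEnd ℂ) (B' p.2 p.1) * B' p.2 p.1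
            * ((Real.exp (u * (E p.1 - E p.2) - β * E p.1) : ℝ) : ℂ) := by
    intro u
    rw [hρ', hexp u, show (-(u:ℂ)) = ((-u : ℝ) : ℂ) from by push_cast; ring, hexp (-u)]
    rw [Matrix.smul_mul, Matrix.smul_mul, Matrix.smul_mul, Matrix.smul_mul,
      Matrix.trace_smul, Matrix.trace_mul_comm]
    rw [show (U * Matrix.diagonal (fun i => (Real.exp (u * E i) : ℂ)) * Uᴴ) *
        ((U * Matrix.diagonal (fun i => (Real.exp (-β * E i) : ℂ)) * Uᴴ) * Bᴴ *
          (U * Matrix.diagonal (fun i => (Real.exp (-u * E i) : ℂ)) * Uᴴ) * B)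
      = ((U * Matrix.diagonal (fun i => (Real.exp (u * E i) : ℂ)) * Uᴴ) *
          (U * Matrix.diagonal (fun i => (Real.exp (-β * E i) : ℂ)) * Uᴴ)) * Bᴴ *
          (U * Matrix.diagonal (fun i => (Real.exp (-u * E i) : ℂ)) * Uᴴ) * B from by
        simp only [Matrix.mul_assoc]]
    rw [sandwich_mul hU, trace_sandwich hU hU', hBH]
    rw [Fintype.sum_prod_type]
    rw [smul_eq_mul]
    congr 1
    refine Finset.sum_congr rfl fun i _ => Finset.sum_congr rfl fun j _ => ?_
    rw [Matrix.conjTranspose_apply, Complex.star_def]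
    rw [show Real.exp (u * (E i - E j) - β * E i)
      = Real.exp (u * E i) * Real.exp (-β * E i) * Real.exp (-u * E j) from by
        rw [← Real.exp_add, ← Real.exp_add]; congr 1; ring]
    push_cast
    ring
  set SB : ℝ := ∑ p : n × n, Complex.normSq (B' p.2 p.1) * W p.1 p.2 with hSBdef
  have hSBnn : 0 ≤ SB :=
    Finset.sum_nonneg fun p _ => mul_nonneg (Complex.normSq_nonneg _) (hWpos _ _).le
  have hdW : duhamel H β ρ B B = ((β⁻¹ * Zr⁻¹ * SB : ℝ) : ℂ) := by
    unfold duhamel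
    simp only [hint]
    rw [intervalIntegral.integral_const_mul]
    have hfint : ∀ p : n × n, p ∈ Finset.univ → IntervalIntegrable
        (fun u : ℝ => (starRingEnd ℂ) (B' p.2 p.1) * B' p.2 p.1
          * ((Real.exp (u * (E p.1 - E p.2) - β * E p.1) : ℝ) : ℂ))
        MeasureTheory.volume 0 β :=
      fun p _ => Continuous.intervalIntegrable (by fun_prop) 0 β
    rw [intervalIntegral.integral_finset_sum hfint]
    have hterm : ∀ p : n × n,
        (∫ u in (0:ℝ)..β, (starRingEnd ℂ) (B' p.2 p.1) * B' p.2 p.1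
          * ((Real.exp (u * (E p.1 - E p.2) - β * E p.1) : ℝ) : ℂ))
        = ((Complex.normSq (B' p.2 p.1) * W p.1 p.2 : ℝ) : ℂ) := by
      intro p
      rw [show (fun u : ℝ => (starRingEnd ℂ) (B' p.2 p.1) * B' p.2 p.1
          * ((Real.exp (u * (E p.1 - E p.2) - β * E p.1) : ℝ) : ℂ))
        = (fun u : ℝ => ((starRingEnd ℂ) (B' p.2 p.1) * B' p.2 p.1)
          * ((Real.exp (u * (E p.1 - E p.2) - β * E p.1) : ℝ) : ℂ)) from rfl]
      rw [intervalIntegral.integral_const_mul, intervalIntegral.integral_ofReal]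
      rw [mul_comm ((starRingEnd ℂ) (B' p.2 p.1)) (B' p.2 p.1), Complex.mul_conj]
      rw [hWdef]
      push_cast
      ring
    rw [Finset.sum_congr rfl fun p _ => hterm p]
    rw [hSBdef]
    push_cast
    ring
  -- trace of commutators against rho
  have sand2 : ∀ (a : n → ℂ) (X Y : Matrix n n ℂ),
      Matrix.trace ((U * Matrix.diagonal a * Uᴴ) * (X * Y))
        = ∑ i, ∑ j, a i * (Uᴴ * X * U) i j * (Uᴴ * Y * U) j i := by
    intro a X Y
    have h1 := trace_sandwich hU hU' a (fun _ => (1:ℂ)) X Y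
    rw [Matrix.diagonal_one, Matrix.mul_one, hU'] at h1
    rw [show (U * Matrix.diagonal a * Uᴴ) * X * 1 * Y
        = (U * Matrix.diagonal a * Uᴴ) * (X * Y) from by
      rw [Matrix.mul_one, Matrix.mul_assoc]] at h1
    rw [h1]
    exact Finset.sum_congr rfl fun i _ => Finset.sum_congr rfl fun j _ => by ring
  have htr2 : ∀ X Y : Matrix n n ℂ,
      Matrix.trace (ρ * (X * Y - Y * X))
        = (↑Zr)⁻¹ * ∑ i, ∑ j, (Uᴴ * X * U) i j * (Uᴴ * Y * U) j i
            * ((Real.exp (-β * E i) - Real.exp (-β * E j) : ℝ) : ℂ) := by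
    intro X Y
    rw [hρ', Matrix.smul_mul, Matrix.trace_smul, smul_eq_mul]
    congr 1
    rw [mul_sub, Matrix.trace_sub, sand2, sand2]
    rw [show (∑ i, ∑ j, ((Real.exp (-β * E i) : ℝ) : ℂ) * (Uᴴ * Y * U) i j * (Uᴴ * X * U) j i)
        = ∑ i, ∑ j, ((Real.exp (-β * E j) : ℝ) : ℂ) * (Uᴴ * Y * U) j i * (Uᴴ * X * U) i j
      from Finset.sum_comm]
    rw [← Finset.sum_sub_distrib]
    refine Finset.sum_congr rfl fun i _ => ?_
    rw [← Finset.sum_sub_distrib]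
    refine Finset.sum_congr rfl fun j _ => ?_
    push_cast
    ring
    -- commutator conjugation
  have cUU' : ∀ M : Matrix n n ℂ, U * (Uᴴ * M) = M := fun M => by
    rw [← Matrix.mul_assoc, hU', one_mul]
  have hHU : Uᴴ * H * U = Matrix.diagonal (fun i => (E i : ℂ)) := by
    rw [hspec]
    calc Uᴴ * (U * Matrix.diagonal (fun i => (E i : ℂ)) * Uᴴ) * U
        = (Uᴴ * U) * Matrix.diagonal (fun i => (E i : ℂ)) * (Uᴴ * U) := by
          simp only [Matrix.mul_assoc]
      _ = Matrix.diagonal (fun i => (E i : ℂ)) := by rw [hU, one_mul, mul_one]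
  have hconjm : ∀ X Y : Matrix n n ℂ, Uᴴ * (X * Y) * U = (Uᴴ * X * U) * (Uᴴ * Y * U) := by
    intro X Y
    have h : (Uᴴ * X * U) * (Uᴴ * Y * U) = Uᴴ * (X * Y) * U :=
      calc (Uᴴ * X * U) * (Uᴴ * Y * U) = Uᴴ * (X * (U * (Uᴴ * (Y * U)))) := by
            simp only [Matrix.mul_assoc]
        _ = Uᴴ * (X * (Y * U)) := by rw [cUU']
        _ = Uᴴ * (X * Y) * U := by simp only [Matrix.mul_assoc]
    exact h.symm
  have hHA : Uᴴ * (H * A - A * H) * U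
      = Matrix.diagonal (fun i => (E i : ℂ)) * A' - A' * Matrix.diagonal (fun i => (E i : ℂ)) := by
    rw [Matrix.mul_sub, Matrix.sub_mul, hconjm H A, hconjm A H, hHU, hA'def]
  have hHAapp : ∀ i j : n,
      (Uᴴ * (H * A - A * H) * U) j i = ((E j : ℂ) - (E i : ℂ)) * A' j i := by
    intro i j
    rw [hHA]
    simp only [Matrix.sub_apply, Matrix.diagonal_mul, Matrix.mul_diagonal]
    ring
  -- trace of the double commutator
  set SA : ℝ := ∑ p : n × n, (E p.2 - E p.1)^2 * W p.1 p.2 * Complex.normSq (A' p.2 p.1)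
    with hSAdef
  have hSAnn : 0 ≤ SA := Finset.sum_nonneg fun p _ =>
    mul_nonneg (mul_nonneg (sq_nonneg _) (hWpos _ _).le) (Complex.normSq_nonneg _)
  have hTA : Matrix.trace (ρ * (Aᴴ * (H * A - A * H) - (H * A - A * H) * Aᴴ))
      = ((Zr⁻¹ * SA : ℝ) : ℂ) := by
    rw [htr2 Aᴴ (H * A - A * H)]
    have hterm : ∀ i j : n, (Uᴴ * Aᴴ * U) i j * (Uᴴ * (H * A - A * H) * U) j i
          * ((Real.exp (-β * E i) - Real.exp (-β * E j) : ℝ) : ℂ)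
        = (((E j - E i)^2 * W i j * Complex.normSq (A' j i) : ℝ) : ℂ) := by
      intro i j
      rw [hAH, Matrix.conjTranspose_apply, Complex.star_def, hHAapp i j, ← hWkey i j]
      rw [show (starRingEnd ℂ) (A' j i) * (((E j : ℂ) - (E i : ℂ)) * A' j i)
            * (((E j - E i) * W i j : ℝ) : ℂ)
          = (A' j i * (starRingEnd ℂ) (A' j i))
            * ((((E j : ℂ) - (E i : ℂ))) * (((E j - E i) * W i j : ℝ) : ℂ)) from by ring]
      rw [Complex.mul_conj]
      push_cast
      ring
    rw [Finset.sum_congr rfl fun i _ => Finset.sum_congr rfl fun j _ => hterm i j]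
    rw [hSAdef, Fintype.sum_prod_type]
    push_cast
    ring
  -- trace of the first commutator
  have hTB : Matrix.trace (ρ * (Aᴴ * B - B * Aᴴ))
      = (↑Zr)⁻¹ * ∑ p : n × n, (starRingEnd ℂ) (A' p.2 p.1) * B' p.2 p.1
          * (((E p.2 - E p.1) * W p.1 p.2 : ℝ) : ℂ) := by
    rw [htr2 Aᴴ B, Fintype.sum_prod_type]
    refine congrArg (fun x => (↑Zr : ℂ)⁻¹ * x) ?_
    refine Finset.sum_congr rfl fun i _ => Finset.sum_congr rfl fun j _ => ?_
    rw [hAH, Matrix.conjTranspose_apply, Complex.star_def, ← hWkey i j, hB'def]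
    try push_cast
    try ring
  refine ⟨by rw [hdW]; exact Complex.ofReal_im _, ?_,
    by rw [hTA]; exact Complex.ofReal_im _, ?_, ?_⟩
  · rw [hdW, Complex.ofReal_re]
    exact mul_nonneg (mul_nonneg (inv_nonneg.mpr hβ.le) (inv_nonneg.mpr hZrpos.le)) hSBnn
  · rw [hTA, Complex.ofReal_re]
    exact mul_nonneg (inv_nonneg.mpr hZrpos.le) hSAnn
  -- the inequality
  rw [hTB, hTA, hdW, Complex.ofReal_re, Complex.ofReal_re]
  set t : n × n → ℂ := fun p => (starRingEnd ℂ) (A' p.2 p.1) * B' p.2 p.1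
      * (((E p.2 - E p.1) * W p.1 p.2 : ℝ) : ℂ) with htdef
  set f : n × n → ℝ := fun p => Real.sqrt (W p.1 p.2)
      * (|E p.2 - E p.1| * ‖A' p.2 p.1‖) with hfdef
  set g : n × n → ℝ := fun p => Real.sqrt (W p.1 p.2) * ‖B' p.2 p.1‖ with hgdef
  have habs : ‖(↑Zr)⁻¹ * ∑ p : n × n, t p‖
      = Zr⁻¹ * ‖∑ p : n × n, t p‖ := by
    rw [norm_mul, norm_inv, Complex.norm_real, Real.norm_of_nonneg hZrpos.le]
  have h1 : ‖∑ p : n × n, t p‖ ≤ ∑ p : n × n, f p * g p := by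
    refine le_trans (norm_sum_le _ _) (le_of_eq (Finset.sum_congr rfl fun p _ => ?_))
    rw [htdef]
    simp only [norm_mul, Complex.norm_conj, Complex.norm_real, Real.norm_eq_abs]
    rw [abs_of_pos (hWpos p.1 p.2)]
    simp only [hfdef, hgdef]
    have hsq : Real.sqrt (W p.1 p.2) * Real.sqrt (W p.1 p.2) = W p.1 p.2 :=
      Real.mul_self_sqrt (hWpos p.1 p.2).le
    conv_lhs => rw [← hsq]
    ring
  have hf2 : ∑ p : n × n, f p ^ 2 = SA := by
    rw [hSAdef]
    refine Finset.sum_congr rfl fun p _ => ?_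
    rw [hfdef]
    rw [show (Real.sqrt (W p.1 p.2) * (|E p.2 - E p.1| * ‖A' p.2 p.1‖))^2
        = Real.sqrt (W p.1 p.2)^2 * (|E p.2 - E p.1|^2 * ‖A' p.2 p.1‖^2) from by
      ring]
    rw [Real.sq_sqrt (hWpos p.1 p.2).le, sq_abs, Complex.sq_norm]
    ring
  have hg2 : ∑ p : n × n, g p ^ 2 = SB := by
    rw [hSBdef]
    refine Finset.sum_congr rfl fun p _ => ?_
    rw [hgdef]
    rw [show (Real.sqrt (W p.1 p.2) * ‖B' p.2 p.1‖)^2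
        = Real.sqrt (W p.1 p.2)^2 * ‖B' p.2 p.1‖^2 from by ring]
    rw [Real.sq_sqrt (hWpos p.1 p.2).le, Complex.sq_norm]
    ring
  have hCS := Finset.sum_mul_sq_le_sq_mul_sq Finset.univ f g
  have hsumfg : 0 ≤ ∑ p : n × n, f p * g p := by
    refine Finset.sum_nonneg fun p _ => mul_nonneg ?_ ?_
    · exact mul_nonneg (Real.sqrt_nonneg _) (mul_nonneg (abs_nonneg _) (norm_nonneg _))
    · exact mul_nonneg (Real.sqrt_nonneg _) (norm_nonneg _)
  calc ‖(↑Zr)⁻¹ * ∑ p : n × n, t p‖ ^ 2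
      = (Zr⁻¹ * ‖∑ p : n × n, t p‖) ^ 2 := by rw [habs]
    _ ≤ (Zr⁻¹ * ∑ p : n × n, f p * g p) ^ 2 := by
        apply pow_le_pow_left₀ (mul_nonneg (inv_nonneg.mpr hZrpos.le) (norm_nonneg _))
        exact mul_le_mul_of_nonneg_left h1 (inv_nonneg.mpr hZrpos.le)
    _ = Zr⁻¹ ^ 2 * (∑ p : n × n, f p * g p) ^ 2 := by ring
    _ ≤ Zr⁻¹ ^ 2 * ((∑ p : n × n, f p ^ 2) * ∑ p : n × n, g p ^ 2) := by
        exact mul_le_mul_of_nonneg_left hCS (sq_nonneg _)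
    _ = β * (Zr⁻¹ * SA) * (β⁻¹ * Zr⁻¹ * SB) := by
        rw [hf2, hg2]
        field_simp
end

section
/- Convergence of k-mode fluctuation variances: let ν ≥ 1, let φ : ℤ^ν → ℂ be absolutely summable (∑_{z∈ℤ^ν} |φ(z)| < ∞), and let k ∈ ℝ^ν satisfy exp(2i·k_j) ≠ 1 for every component j. Then lim_{n→∞} (2n+1)^{−ν} · ∑_{x,y ∈ Λ_n} φ(y−x)·cos(k·x)·cos(k·y) = (1/4)·(Φ(k) + Φ(−k)), where Λ_n = {−n,…,n}^ν ⊂ ℤ^ν, k·x = ∑_j k_j x_j, and Φ(k) = ∑_{z∈ℤ^ν} φ(z)·exp(−i k·z). In particular the limit is finite. -/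
open Filter Finset Topology



lemma geom_bound (r : ℂ) (hr : ‖r‖ = 1) (hr1 : r ≠ 1) (a b : ℤ) :
    ‖∑ m ∈ Finset.Icc a b, r ^ m‖ ≤ 2 / ‖r - 1‖ := by
  have hr0 : r ≠ 0 := by intro h; simp [h] at hr
  have hd : ‖r - 1‖ ≠ 0 := by simp [sub_eq_zero, hr1]
  rw [Int.Icc_eq_finset_map, Finset.sum_map]
  simp only [Function.Embedding.trans_apply, Nat.castEmbedding_apply, addLeftEmbedding_apply]
  have : ∀ j : ℕ, r ^ (a + (j:ℤ)) = r ^ a * r ^ j := by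
    intro j; rw [zpow_add₀ hr0, zpow_natCast]
  simp_rw [this, ← Finset.mul_sum]
  rw [norm_mul, geom_sum_eq hr1, norm_div]
  have habs : ‖r ^ a‖ = 1 := by
    rw [norm_zpow, hr, one_zpow]
  rw [habs, one_mul, div_le_div_iff_of_pos_right (by positivity)]
  calc ‖r ^ (b+1-a).toNat - 1‖ ≤ ‖r ^ (b+1-a).toNat‖ + 1 :=
        by simpa using norm_sub_le (r ^ (b+1-a).toNat) 1
    _ ≤ 2 := by rw [norm_pow, hr, one_pow]; norm_num

lemma sum_box_exp_bound {d : ℕ} (r : Fin d → ℂ) (hr : ∀ j, ‖r j‖ = 1)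
    (hr1 : ∀ j, r j ≠ 1) (a b : Fin d → ℤ) :
    ‖∑ x ∈ Finset.Icc a b, ∏ j, r j ^ (x j)‖ ≤ ∏ j, 2 / ‖r j - 1‖ := by
  rw [Pi.Icc_eq, ← Finset.prod_univ_sum]
  rw [norm_prod]
  exact Finset.prod_le_prod (fun j _ => (norm_nonneg _))
    (fun j _ => geom_bound (r j) (hr j) (hr1 j) (a j) (b j))

noncomputable def cube (d n : ℕ) : Finset (Fin d → ℤ) :=
  Finset.Icc (fun _ : Fin d => -(n : ℤ)) (fun _ : Fin d => (n : ℤ))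

noncomputable def qbox (d n : ℕ) (z : Fin d → ℤ) : Finset (Fin d → ℤ) :=
  Finset.Icc (fun j => max (-(n:ℤ)) (-(n:ℤ) - z j)) (fun j => min (n:ℤ) ((n:ℤ) - z j))

lemma mem_qbox {d n : ℕ} {z x : Fin d → ℤ} :
    x ∈ qbox d n z ↔ x ∈ cube d n ∧ x + z ∈ cube d n := by
  simp only [qbox, cube, Finset.mem_Icc, Pi.le_def, Pi.add_apply]
  constructor
  · intro h
    refine ⟨⟨fun j => ?_, fun j => ?_⟩, ⟨fun j => ?_, fun j => ?_⟩⟩ <;>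
      (have h1 := h.1 j; have h2 := h.2 j; simp only [le_min_iff, max_le_iff] at *; omega)
  · rintro ⟨⟨h1, h2⟩, h3, h4⟩
    refine ⟨fun j => ?_, fun j => ?_⟩ <;>
      (have := h1 j; have := h2 j; have := h3 j; have := h4 j;
        simp only [le_min_iff, le_max_iff, max_le_iff] at *; omega)

open Filter in
lemma tendsto_two_n_one : Tendsto (fun n : ℕ => 2*(n:ℝ)+1) atTop atTop := by
  apply tendsto_atTop_add_const_right
  exact (tendsto_natCast_atTop_atTop).const_mul_atTop two_pos

open Filter in
lemma tendsto_qbox_card (d : ℕ) (z : Fin d → ℤ) :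
    Tendsto (fun n : ℕ => ((qbox d n z).card : ℝ) / (2*(n:ℝ)+1)^d) atTop (𝓝 1) := by
  have hfac : ∀ j : Fin d, Tendsto
      (fun n : ℕ => (2*(n:ℝ)+1 - ((z j).natAbs : ℝ)) / (2*(n:ℝ)+1)) atTop (𝓝 1) := by
    intro j
    have h0 : Tendsto (fun n : ℕ => ((z j).natAbs : ℝ) / (2*(n:ℝ)+1)) atTop (𝓝 0) := by
      have := (tendsto_inv_atTop_zero.comp tendsto_two_n_one).const_mul ((z j).natAbs : ℝ)
      simpa [div_eq_mul_inv, Function.comp] using this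
    have h1 : Tendsto (fun n : ℕ => 1 - ((z j).natAbs : ℝ) / (2*(n:ℝ)+1)) atTop (𝓝 (1 - 0)) :=
      tendsto_const_nhds.sub h0
    rw [sub_zero] at h1
    apply h1.congr'
    filter_upwards [tendsto_two_n_one.eventually_gt_atTop 0] with n hn
    field_simp
  have hprod : Tendsto (fun n : ℕ => ∏ j : Fin d,
      (2*(n:ℝ)+1 - ((z j).natAbs : ℝ)) / (2*(n:ℝ)+1)) atTop (𝓝 (∏ _j : Fin d, (1:ℝ))) :=
    tendsto_finset_prod _ (fun j _ => hfac j)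
  rw [Finset.prod_const_one] at hprod
  apply hprod.congr'
  filter_upwards [eventually_atTop.2 ⟨Finset.univ.sup (fun j => (z j).natAbs), fun n hn => hn⟩]
    with n hn
  have hzn : ∀ j, (z j).natAbs ≤ n := fun j =>
    (Finset.le_sup (f := fun j => (z j).natAbs) (Finset.mem_univ j)).trans hn
  have hcard : (qbox d n z).card = ∏ j, (2*n+1 - (z j).natAbs) := by
    rw [qbox, Pi.card_Icc]
    congr 1; funext j
    rw [Int.card_Icc]
    have := hzn j
    omega
  rw [hcard]
  push_cast
  rw [Finset.prod_div_distrib, Finset.prod_const]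
  congr 1
  · congr 1; funext j
    have := hzn j
    rw [Nat.cast_sub (by omega)]
    push_cast; ring
  · simp [Finset.card_univ]

noncomputable def sk {d : ℕ} (k : Fin d → ℝ) (x : Fin d → ℤ) : ℝ := ∑ j, k j * (x j : ℝ)

noncomputable def ee {d : ℕ} (k : Fin d → ℝ) (x : Fin d → ℤ) : ℂ :=
  Complex.exp (Complex.I * ((sk k x : ℝ) : ℂ))

variable {d : ℕ} {k : Fin d → ℝ}

lemma sk_add (x y : Fin d → ℤ) : sk k (x + y) = sk k x + sk k y := by
  simp only [sk, Pi.add_apply, ← Finset.sum_add_distrib]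
  apply Finset.sum_congr rfl; intros; push_cast; ring

lemma sk_neg (x : Fin d → ℤ) : sk k (-x) = - sk k x := by
  simp only [sk, Pi.neg_apply, ← Finset.sum_neg_distrib]
  apply Finset.sum_congr rfl; intros; push_cast; ring

lemma ee_mul (x y : Fin d → ℤ) : ee k x * ee k y = ee k (x + y) := by
  rw [ee, ee, ee, ← Complex.exp_add, sk_add]
  congr 1; push_cast; ring

lemma ee_sq (x : Fin d → ℤ) :
    ee k x * ee k x = ∏ j, (Complex.exp (2 * Complex.I * (k j : ℂ))) ^ (x j) := by
  rw [ee, ← Complex.exp_add]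
  have h : Complex.I * ((sk k x : ℝ) : ℂ) + Complex.I * ((sk k x : ℝ) : ℂ) =
      ∑ j, ((x j : ℤ) : ℂ) * (2 * Complex.I * (k j : ℂ)) := by
    rw [sk]; push_cast
    rw [Finset.mul_sum, ← Finset.sum_add_distrib]
    apply Finset.sum_congr rfl; intros; ring
  rw [h, Complex.exp_sum]
  exact Finset.prod_congr rfl fun j _ => Complex.exp_int_mul _ _

lemma cos_eq_ee (x : Fin d → ℤ) :
    (Real.cos (sk k x) : ℂ) = (ee k x + ee k (-x)) / 2 := by
  have e1 : ((sk k x : ℝ) : ℂ) * Complex.I = Complex.I * ((sk k x : ℝ) : ℂ) := mul_comm _ _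
  have e2 : -((sk k x : ℝ) : ℂ) * Complex.I = Complex.I * ((sk k (-x) : ℝ) : ℂ) := by
    rw [sk_neg]; push_cast; ring
  calc (Real.cos (sk k x) : ℂ) = Complex.cos ((sk k x : ℝ) : ℂ) := Complex.ofReal_cos _
    _ = (Complex.exp (((sk k x : ℝ) : ℂ) * Complex.I)
          + Complex.exp (-((sk k x : ℝ) : ℂ) * Complex.I)) / 2 := by
        rw [eq_div_iff (two_ne_zero' ℂ), mul_comm, Complex.two_cos]
    _ = (ee k x + ee k (-x)) / 2 := by rw [e1, e2]; rfl

lemma abs_rr (j : Fin d) : ‖Complex.exp (2 * Complex.I * (k j : ℂ))‖ = 1 := by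
  rw [Complex.norm_exp]
  simp [Complex.mul_re]

lemma abs_ee (x : Fin d → ℤ) : ‖ee k x‖ = 1 := by
  rw [ee, Complex.norm_exp]
  simp [Complex.mul_re]

open Filter in
lemma tendsto_inv_pow_zero (hd : 1 ≤ d) :
    Tendsto (fun n : ℕ => ((2*(n:ℝ)+1)^d)⁻¹) atTop (𝓝 0) := by
  apply tendsto_inv_atTop_zero.comp
  exact (tendsto_pow_atTop (by omega)).comp tendsto_two_n_one

open Filter in
lemma tendsto_W (hd : 1 ≤ d) (hk : ∀ j, Complex.exp (2 * Complex.I * (k j : ℂ)) ≠ 1)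
    (z : Fin d → ℤ) :
    Tendsto (fun n : ℕ => ((((2*(n:ℝ)+1)^d : ℝ) : ℂ))⁻¹ *
        ∑ x ∈ qbox d n z, (Real.cos (sk k x) : ℂ) * (Real.cos (sk k (x+z)) : ℂ)) atTop
      (𝓝 ((ee k z + ee k (-z)) / 4)) := by
  set r : Fin d → ℂ := fun j => Complex.exp (2 * Complex.I * (k j : ℂ)) with hr
  have habsr : ∀ j, ‖r j‖ = 1 := fun j => abs_rr j
  have hrne : ∀ j, r j ≠ 0 := fun j => by
    intro h; have := habsr j; rw [h] at this; simp at this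
  have key : ∀ x : Fin d → ℤ,
      (Real.cos (sk k x) : ℂ) * (Real.cos (sk k (x+z)) : ℂ) =
        (ee k z + ee k (-z)) / 4 + (ee k z / 4) * ∏ j, r j ^ (x j)
          + (ee k (-z) / 4) * ∏ j, (r j)⁻¹ ^ (x j) := by
    intro x
    have h1 : ee k x * ee k (x+z) = ee k z * ∏ j, r j ^ (x j) := by
      rw [show x + z = z + x by abel, ← ee_mul, ← mul_assoc, mul_comm (ee k x) (ee k z),
        mul_assoc, ee_sq]
    have h2 : ee k x * ee k (-(x+z)) = ee k (-z) := by
      rw [ee_mul]; congr 1; abel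
    have h3 : ee k (-x) * ee k (x+z) = ee k z := by
      rw [ee_mul]; congr 1; abel
    have h4 : ee k (-x) * ee k (-(x+z)) = ee k (-z) * ∏ j, (r j)⁻¹ ^ (x j) := by
      have hx : ee k (-x) * ee k (-x) = ∏ j, (r j)⁻¹ ^ (x j) := by
        rw [ee_sq]
        exact Finset.prod_congr rfl fun j _ => by rw [Pi.neg_apply, zpow_neg, inv_zpow]
      rw [show -(x+z) = -z + -x from by abel, ← ee_mul, mul_left_comm, hx]
    rw [cos_eq_ee, cos_eq_ee]
    linear_combination (h1 + h2 + h3 + h4) / 4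
  have hsum : ∀ n : ℕ, ∑ x ∈ qbox d n z, (Real.cos (sk k x) : ℂ) * (Real.cos (sk k (x+z)) : ℂ)
      = ((qbox d n z).card : ℂ) * ((ee k z + ee k (-z)) / 4)
        + (ee k z / 4) * ∑ x ∈ qbox d n z, ∏ j, r j ^ (x j)
        + (ee k (-z) / 4) * ∑ x ∈ qbox d n z, ∏ j, (r j)⁻¹ ^ (x j) := by
    intro n
    rw [Finset.sum_congr rfl (fun x _ => key x)]
    rw [Finset.sum_add_distrib, Finset.sum_add_distrib, ← Finset.mul_sum, ← Finset.mul_sum,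
      Finset.sum_const, nsmul_eq_mul]
  simp only [hsum]
  have h1 : Tendsto (fun n : ℕ => ((((2*(n:ℝ)+1)^d : ℝ) : ℂ))⁻¹ *
      (((qbox d n z).card : ℂ) * ((ee k z + ee k (-z)) / 4))) atTop
      (𝓝 ((ee k z + ee k (-z)) / 4)) := by
    have hc : Tendsto (fun n : ℕ => ((((qbox d n z).card : ℝ) / (2*(n:ℝ)+1)^d : ℝ) : ℂ))
        atTop (𝓝 ((1:ℝ) : ℂ)) :=
      (Complex.continuous_ofReal.tendsto _).comp (tendsto_qbox_card d z)
    have := hc.mul_const ((ee k z + ee k (-z)) / 4)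
    rw [Complex.ofReal_one, one_mul] at this
    apply this.congr
    intro n
    push_cast
    ring
  have hzero : ∀ (w : ℂ) (r' : Fin d → ℂ), (∀ j, ‖r' j‖ = 1) → (∀ j, r' j ≠ 1) →
      Tendsto (fun n : ℕ => ((((2*(n:ℝ)+1)^d : ℝ) : ℂ))⁻¹ *
        ((w / 4) * ∑ x ∈ qbox d n z, ∏ j, r' j ^ (x j))) atTop (𝓝 0) := by
    intro w r' habs hne
    have hb : Tendsto (fun n : ℕ => ((2*(n:ℝ)+1)^d)⁻¹ *
        (‖w‖ / 4 * ∏ j, 2 / ‖r' j - 1‖)) atTop (𝓝 0) := by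
      have := (tendsto_inv_pow_zero hd).mul_const
        (‖w‖ / 4 * ∏ j, 2 / ‖r' j - 1‖)
      rwa [zero_mul] at this
    apply squeeze_zero_norm _ hb
    intro n
    rw [norm_mul, norm_mul, norm_inv, norm_div]
    have e4 : ‖(4:ℂ)‖ = 4 := by
      rw [show (4:ℂ) = ((4:ℝ):ℂ) from by norm_num, Complex.norm_real]; norm_num
    rw [e4, Complex.norm_real, Real.norm_eq_abs, abs_of_pos (by positivity)]
    apply mul_le_mul_of_nonneg_left _ (by positivity)
    exact mul_le_mul_of_nonneg_left (sum_box_exp_bound r' habs hne _ _) (by positivity)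
  have hcomb := (h1.add (hzero (ee k z) r habsr hk)).add
    (hzero (ee k (-z)) (fun j => (r j)⁻¹)
      (fun j => by rw [norm_inv, habsr j, inv_one])
      (fun j => by rw [ne_eq, inv_eq_one]; exact hk j))
  rw [add_zero, add_zero] at hcomb
  apply hcomb.congr
  intro n
  ring

lemma qbox_card_le (n : ℕ) (z : Fin d → ℤ) :
    ((qbox d n z).card : ℝ) ≤ (2*(n:ℝ)+1)^d := by
  have h : (qbox d n z).card ≤ (2*n+1)^d := by
    rw [qbox, Pi.card_Icc]
    calc ∏ j, #(Finset.Icc (-(n:ℤ) ⊔ (-(n:ℤ) - z j)) ((n:ℤ) ⊓ ((n:ℤ) - z j)))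
        ≤ ∏ _j : Fin d, (2*n+1) := Finset.prod_le_prod' ?_
      _ = (2*n+1)^d := by rw [Finset.prod_const, Finset.card_univ, Fintype.card_fin]
    intro j _
    rw [Int.card_Icc]
    omega
  calc ((qbox d n z).card : ℝ) ≤ (((2*n+1)^d : ℕ) : ℝ) := by exact_mod_cast h
    _ = (2*(n:ℝ)+1)^d := by push_cast; ring

/-- convergence of k-mode fluctuation variances: for φ : ℤ^ν → ℂ absolutely
summable and k ∈ ℝ^ν with exp(2ik_j) ≠ 1 for every component j,
lim_{n→∞} (2n+1)^{−ν} ∑_{x,y ∈ Λ_n} φ(y−x)·cos(k·x)·cos(k·y) = (1/4)(Φ(k) + Φ(−k)),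
where Λ_n = {−n,…,n}^ν and Φ(k) = ∑_{z∈ℤ^ν} φ(z)·exp(−ik·z). -/
theorem k_mode_fluctuation_variance_limit
    (d : ℕ) (hd : 1 ≤ d) (φ : (Fin d → ℤ) → ℂ) (hφ : Summable fun z => ‖φ z‖)
    (k : Fin d → ℝ) (hk : ∀ j, Complex.exp (2 * Complex.I * (k j : ℂ)) ≠ 1) :
    Tendsto (fun n : ℕ =>
        (((2 * (n : ℝ) + 1) ^ d)⁻¹ : ℂ) *
          ∑ x ∈ Finset.Icc (fun _ : Fin d => -(n : ℤ)) (fun _ : Fin d => (n : ℤ)),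
            ∑ y ∈ Finset.Icc (fun _ : Fin d => -(n : ℤ)) (fun _ : Fin d => (n : ℤ)),
              φ (y - x) * (Real.cos (∑ j, k j * ((x j : ℝ))) : ℂ) *
                (Real.cos (∑ j, k j * ((y j : ℝ))) : ℂ))
      atTop
      (nhds ((1 / 4 : ℂ) *
        ((∑' z : Fin d → ℤ, φ z * Complex.exp (-Complex.I * (∑ j, k j * ((z j : ℝ))))) +
          (∑' z : Fin d → ℤ, φ z * Complex.exp (Complex.I * (∑ j, k j * ((z j : ℝ)))))))) := by
  classical
  have hpref : ∀ n : ℕ, (((2 * (n : ℝ) + 1) ^ d)⁻¹ : ℂ) = ((((2*(n:ℝ)+1)^d : ℝ)) : ℂ)⁻¹ := by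
    intro n; push_cast; ring
  -- Step 1: rewrite the double sum as a tsum over z of sums over qbox
  have key1 : ∀ n : ℕ,
      (∑ x ∈ Finset.Icc (fun _ : Fin d => -(n : ℤ)) (fun _ : Fin d => (n : ℤ)),
        ∑ y ∈ Finset.Icc (fun _ : Fin d => -(n : ℤ)) (fun _ : Fin d => (n : ℤ)),
          φ (y - x) * (Real.cos (∑ j, k j * ((x j : ℝ))) : ℂ) *
            (Real.cos (∑ j, k j * ((y j : ℝ))) : ℂ))
      = ∑' z : Fin d → ℤ, φ z * ∑ x ∈ qbox d n z,
          (Real.cos (sk k x) : ℂ) * (Real.cos (sk k (x+z)) : ℂ) := by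
    intro n
    set Λ : Finset (Fin d → ℤ) :=
      Finset.Icc (fun _ : Fin d => -(n : ℤ)) (fun _ : Fin d => (n : ℤ)) with hΛ
    set g : (Fin d → ℤ) → (Fin d → ℤ) → ℂ := fun z x =>
      if x + z ∈ Λ then φ z * ((Real.cos (sk k x) : ℂ) * (Real.cos (sk k (x+z)) : ℂ)) else 0
      with hg
    have hmem : ∀ x z : Fin d → ℤ, x + z ∈ Λ ↔
        z ∈ Finset.Icc ((fun _ : Fin d => -(n:ℤ)) - x) ((fun _ : Fin d => (n:ℤ)) - x) := by
      intro x z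
      simp only [hΛ, Finset.mem_Icc, Pi.le_def, Pi.add_apply, Pi.sub_apply]
      constructor
      · rintro ⟨h1, h2⟩
        exact ⟨fun j => by have := h1 j; omega, fun j => by have := h2 j; omega⟩
      · rintro ⟨h1, h2⟩
        exact ⟨fun j => by have := h1 j; omega, fun j => by have := h2 j; omega⟩
    have hzero : ∀ x z : Fin d → ℤ,
        z ∉ Finset.Icc ((fun _ : Fin d => -(n:ℤ)) - x) ((fun _ : Fin d => (n:ℤ)) - x) →
        g z x = 0 := by
      intro x z hz
      rw [hg]
      exact if_neg (fun h => hz ((hmem x z).1 h))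
    have hin : ∀ x : Fin d → ℤ,
        (∑ y ∈ Λ, φ (y - x) * (Real.cos (sk k x) : ℂ) * (Real.cos (sk k y) : ℂ))
          = ∑' z, g z x := by
      intro x
      have hmap : Λ = (Finset.Icc ((fun _ : Fin d => -(n:ℤ)) - x)
          ((fun _ : Fin d => (n:ℤ)) - x)).map (addLeftEmbedding x) := by
        rw [Finset.map_add_left_Icc, hΛ]
        congr 1 <;> abel
      rw [tsum_eq_sum (hzero x), hmap, Finset.sum_map]
      apply Finset.sum_congr rfl
      intro z hz
      simp only [addLeftEmbedding_apply, hg]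
      rw [if_pos ((hmem x z).2 hz), add_sub_cancel_left]
      ring
    calc (∑ x ∈ Λ, ∑ y ∈ Λ, φ (y - x) * (Real.cos (∑ j, k j * ((x j : ℝ))) : ℂ) *
            (Real.cos (∑ j, k j * ((y j : ℝ))) : ℂ))
        = ∑ x ∈ Λ, ∑' z, g z x := Finset.sum_congr rfl (fun x _ => hin x)
      _ = ∑' z, ∑ x ∈ Λ, g z x := by
          rw [← Summable.tsum_finsetSum]
          intro x _
          exact summable_of_ne_finset_zero (hzero x)
      _ = ∑' z : Fin d → ℤ, φ z * ∑ x ∈ qbox d n z,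
            (Real.cos (sk k x) : ℂ) * (Real.cos (sk k (x+z)) : ℂ) := by
          apply tsum_congr
          intro z
          have hq : qbox d n z = Λ.filter (fun x => x + z ∈ Λ) := by
            ext x
            rw [mem_qbox, Finset.mem_filter]
            exact Iff.rfl
          rw [hq, Finset.sum_filter, Finset.mul_sum]
          apply Finset.sum_congr rfl
          intro x _
          rw [hg, mul_ite, mul_zero]
    -- pointwise limits
  have hglim : ∀ z : Fin d → ℤ, Tendsto (fun n : ℕ =>
      (((2 * (n : ℝ) + 1) ^ d)⁻¹ : ℂ) * (φ z * ∑ x ∈ qbox d n z,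
        (Real.cos (sk k x) : ℂ) * (Real.cos (sk k (x+z)) : ℂ))) atTop
      (𝓝 (φ z * ((ee k z + ee k (-z)) / 4))) := by
    intro z
    have h := (tendsto_W hd hk z).const_mul (φ z)
    apply h.congr
    intro n
    rw [hpref n]
    ring
  -- uniform bound
  have hbound : ∀ (n : ℕ) (z : Fin d → ℤ),
      ‖(((2 * (n : ℝ) + 1) ^ d)⁻¹ : ℂ) * (φ z * ∑ x ∈ qbox d n z,
        (Real.cos (sk k x) : ℂ) * (Real.cos (sk k (x+z)) : ℂ))‖ ≤ ‖φ z‖ := by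
    intro n z
    rw [norm_mul, norm_mul, hpref n]
    have h1 : ‖((((2*(n:ℝ)+1)^d : ℝ)) : ℂ)⁻¹‖ = ((2*(n:ℝ)+1)^d)⁻¹ := by
      rw [norm_inv, Complex.norm_real, Real.norm_eq_abs, abs_of_nonneg (by positivity)]
    have h2 : ‖∑ x ∈ qbox d n z,
        (Real.cos (sk k x) : ℂ) * (Real.cos (sk k (x+z)) : ℂ)‖ ≤ (2*(n:ℝ)+1)^d := by
      calc ‖∑ x ∈ qbox d n z, (Real.cos (sk k x) : ℂ) * (Real.cos (sk k (x+z)) : ℂ)‖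
          ≤ ∑ x ∈ qbox d n z, ‖(Real.cos (sk k x) : ℂ) * (Real.cos (sk k (x+z)) : ℂ)‖ :=
            norm_sum_le _ _
        _ ≤ ∑ _x ∈ qbox d n z, 1 := by
            apply Finset.sum_le_sum
            intro x _
            rw [norm_mul, Complex.norm_real, Complex.norm_real, Real.norm_eq_abs,
              Real.norm_eq_abs]
            exact mul_le_one₀ (Real.abs_cos_le_one _) (abs_nonneg _) (Real.abs_cos_le_one _)
        _ = ((qbox d n z).card : ℝ) := by rw [Finset.sum_const, nsmul_eq_mul, mul_one]
        _ ≤ (2*(n:ℝ)+1)^d := qbox_card_le n z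
    rw [h1]
    calc ((2*(n:ℝ)+1)^d)⁻¹ * (‖φ z‖ * ‖∑ x ∈ qbox d n z,
          (Real.cos (sk k x) : ℂ) * (Real.cos (sk k (x+z)) : ℂ)‖)
        ≤ ((2*(n:ℝ)+1)^d)⁻¹ * (‖φ z‖ * (2*(n:ℝ)+1)^d) := by gcongr
      _ = ‖φ z‖ := by
          have : (2*(n:ℝ)+1)^d ≠ 0 := by positivity
          field_simp
  -- target rewrite
  have hs1 : Summable (fun z : Fin d → ℤ => φ z * ee k (-z)) := by
    apply Summable.of_norm_bounded hφ
    intro z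
    rw [norm_mul, abs_ee, mul_one]
  have hs2 : Summable (fun z : Fin d → ℤ => φ z * ee k z) := by
    apply Summable.of_norm_bounded hφ
    intro z
    rw [norm_mul, abs_ee, mul_one]
  have e1 : ∀ z : Fin d → ℤ,
      Complex.exp (-Complex.I * (∑ j, k j * ((z j : ℝ)))) = ee k (-z) := by
    intro z
    show Complex.exp (-Complex.I * ((sk k z : ℝ) : ℂ)) = ee k (-z)
    rw [ee, sk_neg]
    congr 1
    push_cast
    ring
  have e2 : ∀ z : Fin d → ℤ,
      Complex.exp (Complex.I * (∑ j, k j * ((z j : ℝ)))) = ee k z := fun z => rfl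
  have htarget : ((1 / 4 : ℂ) *
      ((∑' z : Fin d → ℤ, φ z * Complex.exp (-Complex.I * (∑ j, k j * ((z j : ℝ))))) +
        (∑' z : Fin d → ℤ, φ z * Complex.exp (Complex.I * (∑ j, k j * ((z j : ℝ)))))))
      = ∑' z : Fin d → ℤ, φ z * ((ee k z + ee k (-z)) / 4) := by
    simp only [e1, e2]
    rw [← Summable.tsum_add hs1 hs2, ← tsum_mul_left]
    apply tsum_congr
    intro z
    ring
  rw [show (fun n : ℕ =>
        (((2 * (n : ℝ) + 1) ^ d)⁻¹ : ℂ) *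
          ∑ x ∈ Finset.Icc (fun _ : Fin d => -(n : ℤ)) (fun _ : Fin d => (n : ℤ)),
            ∑ y ∈ Finset.Icc (fun _ : Fin d => -(n : ℤ)) (fun _ : Fin d => (n : ℤ)),
              φ (y - x) * (Real.cos (∑ j, k j * ((x j : ℝ))) : ℂ) *
                (Real.cos (∑ j, k j * ((y j : ℝ))) : ℂ))
      = fun n : ℕ => ∑' z : Fin d → ℤ, (((2 * (n : ℝ) + 1) ^ d)⁻¹ : ℂ) *
          (φ z * ∑ x ∈ qbox d n z,
            (Real.cos (sk k x) : ℂ) * (Real.cos (sk k (x+z)) : ℂ))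
      from funext fun n => by rw [key1 n, ← tsum_mul_left], htarget]
  exact tendsto_tsum_of_dominated_convergence hφ hglim
    (Eventually.of_forall (fun n z => hbound n z))
end
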